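/- arXiv:2511.04585 — 6 statements merged into one kernel-verified Lean document; each statement's English description precedes it below -/
import Mathlib

section
/- Every positive integer n can be written as a sum of distinct 3-smooth integers (integers of the form 2^x·3^y) such that no summand divides another. Moreover, if n is even, all summands can be taken to be even. -/
theorem smooth3_no_divide (n : ℕ) (hn : 0 < n) :
    ∃ B : Finset ℕ, B.Nonempty ∧
      (∀ b ∈ B, ∃ x y : ℕ, b = 2 ^ x * 3 ^ y) ∧
      (∑ b ∈ B, b) = n ∧
      (∀ a ∈ B, ∀ b ∈ B, a ≠ b → ¬ a ∣ b) ∧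
      (Even n → ∀ b ∈ B, Even b) := by
  induction n using Nat.strong_induction_on with
  | _ n ih =>
  rcases Nat.even_or_odd n with he | ho
  · -- even case
    obtain ⟨m, hm⟩ := he
    have hmn : n = 2 * m := by omega
    have hmpos : 0 < m := by omega
    obtain ⟨B, hne, hsm, hsum, hdvd, _⟩ := ih m (by omega) hmpos
    refine ⟨B.image (2 * ·), hne.image _, ?_, ?_, ?_, ?_⟩
    · intro b hb
      simp only [Finset.mem_image] at hb
      obtain ⟨a, ha, rfl⟩ := hb
      obtain ⟨x, y, rfl⟩ := hsm a ha
      exact ⟨x + 1, y, by ring⟩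
    · rw [Finset.sum_image (by intro x _ y _ h; simpa using h)]
      rw [← Finset.mul_sum, hsum, hmn]
    · intro a ha b hb hab hd
      simp only [Finset.mem_image] at ha hb
      obtain ⟨a', ha', rfl⟩ := ha
      obtain ⟨b', hb', rfl⟩ := hb
      exact hdvd a' ha' b' hb' (by omega)
        ((mul_dvd_mul_iff_left (two_ne_zero)).mp hd)
    · intro _ b hb
      simp only [Finset.mem_image] at hb
      obtain ⟨a, _, rfl⟩ := hb
      exact ⟨a, by ring⟩
  · -- odd case
    set k := Nat.log 3 n with hk
    have h1 : 3 ^ k ≤ n := Nat.pow_log_le_self 3 hn.ne'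
    have h2 : n < 3 ^ (k + 1) := Nat.lt_pow_succ_log_self (by norm_num) n
    have h3 : n < 3 * 3 ^ k := by rw [pow_succ] at h2; omega
    have hodd3 : Odd (3 ^ k) := Odd.pow (by decide)
    obtain ⟨r, hr⟩ := hodd3
    obtain ⟨s, hs⟩ := ho
    by_cases hm0 : n = 3 ^ k
    · refine ⟨{3 ^ k}, ⟨3 ^ k, by simp⟩, ?_, by simp [hm0], ?_, ?_⟩
      · intro b hb; simp at hb; exact ⟨0, k, by simp [hb]⟩
      · intro a ha b hb hab; simp at ha hb; omega
      · intro hev; obtain ⟨t, ht⟩ := hev; omega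
    · have hmpos : 0 < n - 3 ^ k := by omega
      have hmeven : ∃ m', n - 3 ^ k = 2 * m' := ⟨s - r, by omega⟩
      obtain ⟨m', hm'⟩ := hmeven
      have hm'pos : 0 < m' := by omega
      have hm'lt : m' < n := by omega
      obtain ⟨B, hne, hsm, hsum, hdvd, _⟩ := ih m' hm'lt hm'pos
      have hpos : ∀ b ∈ B, 0 < b := by
        intro b hb; obtain ⟨x, y, rfl⟩ := hsm b hb; positivity
      have hle : ∀ b ∈ B, b ≤ m' := by
        intro b hb
        calc b = id b := rfl
        _ ≤ ∑ c ∈ B, c := Finset.single_le_sum (fun i _ => Nat.zero_le i) hb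
        _ = m' := hsum
      have hnotin : 3 ^ k ∉ B.image (2 * ·) := by
        simp only [Finset.mem_image]
        rintro ⟨a, _, ha⟩; omega
      refine ⟨insert (3 ^ k) (B.image (2 * ·)), Finset.insert_nonempty _ _, ?_, ?_, ?_, ?_⟩
      · intro b hb
        rcases Finset.mem_insert.mp hb with h | h
        · exact ⟨0, k, by simp [h]⟩
        · simp only [Finset.mem_image] at h
          obtain ⟨a, ha, rfl⟩ := h
          obtain ⟨x, y, rfl⟩ := hsm a ha
          exact ⟨x + 1, y, by ring⟩
      · rw [Finset.sum_insert hnotin, Finset.sum_image (by intro x _ y _ h; simpa using h),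
          ← Finset.mul_sum, hsum]
        omega
      · intro a ha b hb hab hd
        rcases Finset.mem_insert.mp ha with h1a | h1a <;>
          rcases Finset.mem_insert.mp hb with h1b | h1b
        · exact hab (h1a.trans h1b.symm)
        · subst h1a
          simp only [Finset.mem_image] at h1b
          obtain ⟨b', hb', rfl⟩ := h1b
          have hble := hle b' hb'
          have hbpos := hpos b' hb'
          obtain ⟨c, hc⟩ := hd
          have hc1 : c < 2 := by
            by_contra hcc
            have : 2 * 3 ^ k ≤ 3 ^ k * c := by nlinarith
            omega
          interval_cases c <;> omega
        · subst h1b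
          simp only [Finset.mem_image] at h1a
          obtain ⟨a', ha', rfl⟩ := h1a
          have : (2 : ℕ) ∣ 3 ^ k := dvd_trans ⟨a', by ring⟩ hd
          omega
        · simp only [Finset.mem_image] at h1a h1b
          obtain ⟨a', ha', rfl⟩ := h1a
          obtain ⟨b', hb', rfl⟩ := h1b
          exact hdvd a' ha' b' hb' (by omega)
            ((mul_dvd_mul_iff_left (two_ne_zero)).mp hd)
      · intro hev; obtain ⟨t, ht⟩ := hev; omega
end

section
/- Every positive integer n can be written as a sum n = b₁ + b₂ + ... + b_r of distinct 3-smooth integers with b₁ < b₂ < ... < b_r < 6·b₁. -/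
namespace S3aux

/-- 3-smooth window predicate: `n` is a sum of distinct 3-smooth numbers
all lying in `[t, 6t)`. -/
def Good (t n : ℕ) : Prop :=
  ∃ B : Finset ℕ, B.Nonempty ∧ (∀ x ∈ B, ∃ i j : ℕ, x = 2 ^ i * 3 ^ j) ∧
    (∑ b ∈ B, b) = n ∧ ∀ x ∈ B, t ≤ x ∧ x < 6 * t

lemma mkGood (t n : ℕ) (W : Finset ℕ)
    (hW : ∀ x ∈ W, (∃ i j : ℕ, x = 2 ^ i * 3 ^ j) ∧ t ≤ x ∧ x < 6 * t)
    (B : Finset ℕ) (hsub : B ⊆ W) (hne : B.Nonempty)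
    (hsum : (∑ b ∈ B, b) = n) : Good t n :=
  ⟨B, hne, fun x hx => (hW x (hsub hx)).1, hsum,
    fun x hx => ⟨(hW x (hsub hx)).2.1, (hW x (hsub hx)).2.2⟩⟩

lemma good_double {t m : ℕ} (h : Good t m) : Good (2 * t) (2 * m) := by
  obtain ⟨B, hne, hsm, hsum, hb⟩ := h
  refine ⟨B.image (fun x => 2 * x), hne.image _, ?_, ?_, ?_⟩
  · intro x hx
    simp only [Finset.mem_image] at hx
    obtain ⟨y, hy, rfl⟩ := hx
    obtain ⟨i, j, rfl⟩ := hsm y hy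
    exact ⟨i + 1, j, by ring⟩
  · rw [Finset.sum_image (fun x _ y _ h => by have h' : 2 * x = 2 * y := h; omega), ← Finset.mul_sum, hsum]
  · intro x hx
    simp only [Finset.mem_image] at hx
    obtain ⟨y, hy, rfl⟩ := hx
    have := hb y hy
    omega

lemma pow3_odd (j : ℕ) : 3 ^ j % 2 = 1 := by
  induction j with
  | zero => rfl
  | succ j ih => rw [pow_succ]; omega

lemma good_add_pow {t m q : ℕ} (j : ℕ) (h : Good t m) (hq : q = 3 ^ j)
    (h1 : 2 * t ≤ q) (h2 : q < 12 * t) : Good (2 * t) (2 * m + q) := by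
  obtain ⟨B, hne, hsm, hsum, hb⟩ := h
  have hqodd : q % 2 = 1 := by rw [hq]; exact pow3_odd j
  have hnotmem : q ∉ B.image (fun x => 2 * x) := by
    simp only [Finset.mem_image]
    rintro ⟨y, hy, hyq⟩; omega
  refine ⟨insert q (B.image (fun x => 2 * x)), ⟨q, Finset.mem_insert_self _ _⟩, ?_, ?_, ?_⟩
  · intro x hx
    rcases Finset.mem_insert.1 hx with rfl | hx
    · exact ⟨0, j, by simpa using hq⟩
    · simp only [Finset.mem_image] at hx
      obtain ⟨y, hy, rfl⟩ := hx
      obtain ⟨i, j', rfl⟩ := hsm y hy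
      exact ⟨i + 1, j', by ring⟩
  · rw [Finset.sum_insert hnotmem, Finset.sum_image (fun x _ y _ h => by have h' : 2 * x = 2 * y := h; omega), ← Finset.mul_sum, hsum]
    ring
  · intro x hx
    rcases Finset.mem_insert.1 hx with rfl | hx
    · omega
    · simp only [Finset.mem_image] at hx
      obtain ⟨y, hy, rfl⟩ := hx
      have := hb y hy
      omega

lemma good_add_two {t m q : ℕ} (j : ℕ) (h : Good t m) (hq : q = 3 ^ j)
    (h1 : 2 * t ≤ q) (h2 : 3 * q < 12 * t) : Good (2 * t) (2 * m + 4 * q) := by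
  obtain ⟨B, hne, hsm, hsum, hb⟩ := h
  have hqodd : q % 2 = 1 := by rw [hq]; exact pow3_odd j
  have ht : 1 ≤ t := by
    by_contra hc
    have : t = 0 := by omega
    subst this
    obtain ⟨y, hy⟩ := hne
    have := hb y hy
    omega
  have h3notmem : 3 * q ∉ B.image (fun x => 2 * x) := by
    simp only [Finset.mem_image]
    rintro ⟨y, hy, hyq⟩; omega
  have hqnotmem : q ∉ insert (3 * q) (B.image (fun x => 2 * x)) := by
    simp only [Finset.mem_insert, Finset.mem_image]
    rintro (h | ⟨y, hy, hyq⟩) <;> omega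
  refine ⟨insert q (insert (3 * q) (B.image (fun x => 2 * x))),
    ⟨q, Finset.mem_insert_self _ _⟩, ?_, ?_, ?_⟩
  · intro x hx
    rcases Finset.mem_insert.1 hx with rfl | hx
    · exact ⟨0, j, by simpa using hq⟩
    rcases Finset.mem_insert.1 hx with rfl | hx
    · exact ⟨0, j + 1, by rw [hq]; ring⟩
    · simp only [Finset.mem_image] at hx
      obtain ⟨y, hy, rfl⟩ := hx
      obtain ⟨i, j', rfl⟩ := hsm y hy
      exact ⟨i + 1, j', by ring⟩
  · rw [Finset.sum_insert hqnotmem, Finset.sum_insert h3notmem,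
      Finset.sum_image (fun x _ y _ h => by have h' : 2 * x = 2 * y := h; omega), ← Finset.mul_sum, hsum]
    ring
  · intro x hx
    rcases Finset.mem_insert.1 hx with rfl | hx
    · omega
    rcases Finset.mem_insert.1 hx with rfl | hx
    · omega
    · simp only [Finset.mem_image] at hx
      obtain ⟨y, hy, rfl⟩ := hx
      have := hb y hy
      omega

/-- exponent of the least power of 3 that is `≥ 2^a`. -/
def kseq : ℕ → ℕ
  | 0 => 0
  | a + 1 => if 3 ^ kseq a < 2 ^ (a + 1) then kseq a + 1 else kseq a

def pp (a : ℕ) : ℕ := 3 ^ kseq a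

lemma pp_succ (a : ℕ) :
    pp (a + 1) = if pp a < 2 ^ (a + 1) then 3 * pp a else pp a := by
  simp only [pp, kseq]
  split <;> rename_i h
  · simp only [h, ↓reduceIte]; ring
  · simp only [h, ↓reduceIte]

lemma pp_bounds : ∀ a, 2 ^ a ≤ pp a ∧ pp a < 3 * 2 ^ a := by
  intro a
  induction a with
  | zero => exact ⟨le_refl 1, by norm_num [pp, kseq]⟩
  | succ a ih =>
    rw [pp_succ]
    split <;> rename_i h
    · constructor
      · have : 2 ^ (a + 1) = 2 * 2 ^ a := by ring
        omega
      · have : (2:ℕ) ^ (a + 1) = 2 * 2 ^ a := by ring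
        omega
    · have : (2:ℕ) ^ (a + 1) = 2 * 2 ^ a := by ring
      omega

lemma pp_lb (a : ℕ) : 2 ^ a ≤ pp a := (pp_bounds a).1
lemma pp_ub (a : ℕ) : pp a < 3 * 2 ^ a := (pp_bounds a).2

lemma pp_pow3 (a : ℕ) : ∃ j, pp a = 3 ^ j := ⟨kseq a, rfl⟩

def EE : ℕ → ℕ
  | 0 => 0
  | a + 1 => 2 * EE a + pp (a + 1)

def FF : ℕ → ℕ
  | 0 => 0
  | a + 1 => 2 * FF a + (if pp (a + 1) < 2 ^ (a + 2) then pp (a + 1) else 0)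

/-- Key invariant. -/
lemma INV : ∀ a, EE a + pp (a + 1) ≤ 2 * FF a + 3 * 2 ^ a := by
  intro a
  induction a with
  | zero => simp [EE, FF, pp, kseq]
  | succ a ih =>
    have hE : EE (a + 1) = 2 * EE a + pp (a + 1) := rfl
    have hF : FF (a + 1) = 2 * FF a + (if pp (a + 1) < 2 ^ (a + 2) then pp (a + 1) else 0) := rfl
    have hp : pp (a + 2) = if pp (a + 1) < 2 ^ (a + 2) then 3 * pp (a + 1) else pp (a + 1) :=
      pp_succ (a + 1)
    have h2 : (2:ℕ) ^ (a + 1) = 2 * 2 ^ a := by ring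
    by_cases htw : pp (a + 1) < 2 ^ (a + 2)
    · rw [hE, hF, hp, if_pos htw, if_pos htw]; omega
    · rw [hE, hF, hp, if_neg htw, if_neg htw]; omega

lemma EE_ge (x : ℕ) : x * 2 ^ x ≤ EE x := by
  induction x with
  | zero => simp
  | succ x ih =>
    have h1 : (x + 1) * 2 ^ (x + 1) = 2 * (x * 2 ^ x) + 2 * 2 ^ x := by ring
    have h2 : (2:ℕ) ^ (x + 1) = 2 * 2 ^ x := by ring
    have h3 := pp_lb (x + 1)
    have h4 : EE (x + 1) = 2 * EE x + pp (x + 1) := rfl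
    omega

def An (c CA a : ℕ) : ℕ := CA * 2 ^ a + c * EE a
def Sn (c CS a : ℕ) : ℕ := CS * 2 ^ a + c * (EE a + 3 * FF a)

end S3aux

namespace S3aux

/-- the window sum dominates twice the lower bound plus twice the next power. -/
lemma Jlem (c CA CS : ℕ) (hJ : 4 * CA + 15 * c ≤ 2 * CS) (a : ℕ) :
    2 * An c CA a + 2 * (c * pp (a + 1)) ≤ Sn c CS a := by
  have hInv := INV a
  have hp2 := pp_ub (a + 1)
  have h2 : (2:ℕ) ^ (a + 1) = 2 * 2 ^ a := by ring
  -- atoms: multiply hypotheses appropriately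
  have m1 : (4 * CA + 15 * c) * 2 ^ a ≤ (2 * CS) * 2 ^ a :=
    Nat.mul_le_mul_right _ hJ
  have m2 : c * (EE a + pp (a + 1)) ≤ c * (2 * FF a + 3 * 2 ^ a) :=
    Nat.mul_le_mul_left _ hInv
  have m3 : c * pp (a + 1) ≤ c * (6 * 2 ^ a) := by
    apply Nat.mul_le_mul_left
    omega
  unfold An Sn
  -- expand products into linear combinations of atoms
  have e1 : (4 * CA + 15 * c) * 2 ^ a = 4 * (CA * 2 ^ a) + 15 * (c * 2 ^ a) := by ring
  have e2 : c * (EE a + pp (a + 1)) = c * EE a + c * pp (a + 1) := by ring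
  have e3 : c * (2 * FF a + 3 * 2 ^ a) = 2 * (c * FF a) + 3 * (c * 2 ^ a) := by ring
  have e4 : c * (6 * 2 ^ a) = 6 * (c * 2 ^ a) := by ring
  have e5 : (2 * CS) * 2 ^ a = 2 * (CS * 2 ^ a) := by ring
  have e6 : c * (EE a + 3 * FF a) = c * EE a + 3 * (c * FF a) := by ring
  rw [e6]
  rw [e1, e5] at m1
  rw [e2, e3] at m2
  rw [e4] at m3
  omega

/-- Main window lemma, generic over the three families. -/
lemma main (c CA CS j0 : ℕ) (hc : c = 3 ^ j0) (hCA : 1 ≤ CA)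
    (hJ : 4 * CA + 15 * c ≤ 2 * CS)
    (hbase : ∀ n, CA ≤ n → n + CA ≤ CS → Good c n) :
    ∀ a n, An c CA a ≤ n → n + An c CA a ≤ Sn c CS a → Good (c * 2 ^ a) n := by
  intro a
  induction a with
  | zero =>
    intro n h1 h2
    simp only [An, Sn, pow_zero, mul_one, EE, FF] at h1 h2 ⊢
    exact hbase n (by omega) (by omega)
  | succ a ih =>
    intro n h1 h2
    have hc1 : 1 ≤ c := by rw [hc]; exact Nat.one_le_pow _ _ (by norm_num)
    set q := c * pp (a + 1) with hqdef
    have hqpow : ∃ j, q = 3 ^ j := ⟨j0 + kseq (a + 1), by rw [hqdef, hc, pp, ← pow_add]⟩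
    obtain ⟨j, hqj⟩ := hqpow
    have hJ' := Jlem c CA CS hJ a
    have hp1 := pp_lb (a + 1)
    have hp2 := pp_ub (a + 1)
    have h2p : (2:ℕ) ^ (a + 1) = 2 * 2 ^ a := by ring
    -- q bounds relative to t = c * 2^a
    have hq1 : 2 * (c * 2 ^ a) ≤ q := by
      rw [hqdef]
      calc 2 * (c * 2 ^ a) = c * 2 ^ (a + 1) := by ring
      _ ≤ c * pp (a + 1) := Nat.mul_le_mul_left _ hp1
    have hq2 : q < 12 * (c * 2 ^ a) := by
      rw [hqdef]
      calc c * pp (a + 1) < c * (3 * 2 ^ (a + 1)) := by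
            exact mul_lt_mul_of_pos_left hp2 (by omega)
      _ = 6 * (c * 2 ^ a) := by ring
      _ ≤ 12 * (c * 2 ^ a) := by omega
    -- expansions of An, Sn at a+1
    have hA : An c CA (a + 1) = 2 * An c CA a + q := by
      unfold An
      have : EE (a + 1) = 2 * EE a + pp (a + 1) := rfl
      rw [this, hqdef]; ring
    have hS : Sn c CS (a + 1) =
        2 * Sn c CS a + q + (if pp (a + 1) < 2 ^ (a + 2) then 3 * q else 0) := by
      unfold Sn
      have hE : EE (a + 1) = 2 * EE a + pp (a + 1) := rfl
      have hF : FF (a + 1) = 2 * FF a + (if pp (a + 1) < 2 ^ (a + 2) then pp (a + 1) else 0) := rfl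
      rw [hE, hF, hqdef]
      by_cases htw : pp (a + 1) < 2 ^ (a + 2)
      · rw [if_pos htw, if_pos htw]; ring
      · rw [if_neg htw, if_neg htw]; ring
    have htgt : c * 2 ^ (a + 1) = 2 * (c * 2 ^ a) := by ring
    rw [hA] at h1 h2
    rw [hS] at h2
    rw [htgt]
    have hqodd : q % 2 = 1 := by rw [hqj]; exact pow3_odd j
    rcases Nat.even_or_odd n with he | ho
    · -- n even
      obtain ⟨m, rfl⟩ := he
      have hmn : m + m = 2 * m := by ring
      by_cases hcase : m + An c CA a ≤ Sn c CS a
      · have h1' : An c CA a ≤ m := by omega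
        have := good_double (ih m h1' hcase)
        rw [hmn]
        exact this
      · -- forced two-power case
        by_cases htw : pp (a + 1) < 2 ^ (a + 2)
        · rw [if_pos htw] at h2
          have hq3 : 3 * q < 12 * (c * 2 ^ a) := by
            rw [hqdef]
            calc 3 * (c * pp (a + 1)) = c * (3 * pp (a + 1)) := by ring
            _ < c * (3 * 2 ^ (a + 2)) := by
                  exact mul_lt_mul_of_pos_left (by omega) (by omega)
            _ = 12 * (c * 2 ^ a) := by ring
          -- m' = m - 2q
          have hm' : An c CA a ≤ m - 2 * q ∧ (m - 2 * q) + An c CA a ≤ Sn c CS a ∧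
              2 * q ≤ m := by omega
          have hgood := ih (m - 2 * q) hm'.1 hm'.2.1
          have := good_add_two j hgood hqj hq1 hq3
          have heq : 2 * (m - 2 * q) + 4 * q = m + m := by omega
          rw [heq] at this
          exact this
        · rw [if_neg htw] at h2
          omega
    · -- n odd
      obtain ⟨m, rfl⟩ := ho
      have hm1 : An c CA a ≤ (2 * m + 1 - q) / 2 := by omega
      by_cases hcase : (2 * m + 1 - q) / 2 + An c CA a ≤ Sn c CS a
      · have hgood := ih _ hm1 hcase
        have := good_add_pow j hgood hqj hq1 hq2
        have heq : 2 * ((2 * m + 1 - q) / 2) + q = 2 * m + 1 := by omega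
        rw [heq] at this
        exact this
      · by_cases htw : pp (a + 1) < 2 ^ (a + 2)
        · rw [if_pos htw] at h2
          have hq3 : 3 * q < 12 * (c * 2 ^ a) := by
            rw [hqdef]
            calc 3 * (c * pp (a + 1)) = c * (3 * pp (a + 1)) := by ring
            _ < c * (3 * 2 ^ (a + 2)) := by
                  exact mul_lt_mul_of_pos_left (by omega) (by omega)
            _ = 12 * (c * 2 ^ a) := by ring
          have hq3j : 3 * q = 3 ^ (j + 1) := by rw [hqj]; ring
          have hq3ge : 2 * (c * 2 ^ a) ≤ 3 * q := by omega
          have hm3 : An c CA a ≤ (2 * m + 1 - 3 * q) / 2 ∧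
              (2 * m + 1 - 3 * q) / 2 + An c CA a ≤ Sn c CS a ∧ 3 * q ≤ 2 * m + 1 := by
            omega
          have hgood := ih _ hm3.1 hm3.2.1
          have := good_add_pow (j + 1) hgood hq3j hq3ge hq3
          have heq : 2 * ((2 * m + 1 - 3 * q) / 2) + 3 * q = 2 * m + 1 := by omega
          rw [heq] at this
          exact this
        · rw [if_neg htw] at h2
          omega

def W0 : Finset ℕ := {1,2,3,4}
lemma hW0 : ∀ x ∈ W0, (∃ i j : ℕ, x = 2 ^ i * 3 ^ j) ∧ 1 ≤ x ∧ x < 6 * 1 := by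
  intro x hx
  fin_cases hx
  · exact ⟨⟨0, 0, by norm_num⟩, by norm_num⟩
  · exact ⟨⟨1, 0, by norm_num⟩, by norm_num⟩
  · exact ⟨⟨0, 1, by norm_num⟩, by norm_num⟩
  · exact ⟨⟨2, 0, by norm_num⟩, by norm_num⟩

def W1 : Finset ℕ := {3,4,6,8,9,12,16}
lemma hW1 : ∀ x ∈ W1, (∃ i j : ℕ, x = 2 ^ i * 3 ^ j) ∧ 3 ≤ x ∧ x < 6 * 3 := by
  intro x hx
  fin_cases hx
  · exact ⟨⟨0, 1, by norm_num⟩, by norm_num⟩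
  · exact ⟨⟨2, 0, by norm_num⟩, by norm_num⟩
  · exact ⟨⟨1, 1, by norm_num⟩, by norm_num⟩
  · exact ⟨⟨3, 0, by norm_num⟩, by norm_num⟩
  · exact ⟨⟨0, 2, by norm_num⟩, by norm_num⟩
  · exact ⟨⟨2, 1, by norm_num⟩, by norm_num⟩
  · exact ⟨⟨4, 0, by norm_num⟩, by norm_num⟩

def W2 : Finset ℕ := {9,12,16,18,24,27,32,36,48}
lemma hW2 : ∀ x ∈ W2, (∃ i j : ℕ, x = 2 ^ i * 3 ^ j) ∧ 9 ≤ x ∧ x < 6 * 9 := by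
  intro x hx
  fin_cases hx
  · exact ⟨⟨0, 2, by norm_num⟩, by norm_num⟩
  · exact ⟨⟨2, 1, by norm_num⟩, by norm_num⟩
  · exact ⟨⟨4, 0, by norm_num⟩, by norm_num⟩
  · exact ⟨⟨1, 2, by norm_num⟩, by norm_num⟩
  · exact ⟨⟨3, 1, by norm_num⟩, by norm_num⟩
  · exact ⟨⟨0, 3, by norm_num⟩, by norm_num⟩
  · exact ⟨⟨5, 0, by norm_num⟩, by norm_num⟩
  · exact ⟨⟨2, 2, by norm_num⟩, by norm_num⟩
  · exact ⟨⟨4, 1, by norm_num⟩, by norm_num⟩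

lemma base0 : ∀ n, 1 ≤ n → n + 1 ≤ 10 → Good 1 n := by
  intro n h1 h2
  have h2' : n ≤ 9 := by omega
  clear h2
  interval_cases n
  · exact mkGood _ _ _ hW0 {1} (by decide) (by decide) (by decide)
  · exact mkGood _ _ _ hW0 {2} (by decide) (by decide) (by decide)
  · exact mkGood _ _ _ hW0 {3} (by decide) (by decide) (by decide)
  · exact mkGood _ _ _ hW0 {4} (by decide) (by decide) (by decide)
  · exact mkGood _ _ _ hW0 {1,4} (by decide) (by decide) (by decide)
  · exact mkGood _ _ _ hW0 {2,4} (by decide) (by decide) (by decide)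
  · exact mkGood _ _ _ hW0 {3,4} (by decide) (by decide) (by decide)
  · exact mkGood _ _ _ hW0 {1,3,4} (by decide) (by decide) (by decide)
  · exact mkGood _ _ _ hW0 {2,3,4} (by decide) (by decide) (by decide)

lemma base1 : ∀ n, 6 ≤ n → n + 6 ≤ 58 → Good 3 n := by
  intro n h1 h2
  have h2' : n ≤ 52 := by omega
  clear h2
  interval_cases n
  · exact mkGood _ _ _ hW1 {6} (by decide) (by decide) (by decide)
  · exact mkGood _ _ _ hW1 {3,4} (by decide) (by decide) (by decide)
  · exact mkGood _ _ _ hW1 {8} (by decide) (by decide) (by decide)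
  · exact mkGood _ _ _ hW1 {9} (by decide) (by decide) (by decide)
  · exact mkGood _ _ _ hW1 {4,6} (by decide) (by decide) (by decide)
  · exact mkGood _ _ _ hW1 {3,8} (by decide) (by decide) (by decide)
  · exact mkGood _ _ _ hW1 {12} (by decide) (by decide) (by decide)
  · exact mkGood _ _ _ hW1 {4,9} (by decide) (by decide) (by decide)
  · exact mkGood _ _ _ hW1 {6,8} (by decide) (by decide) (by decide)
  · exact mkGood _ _ _ hW1 {3,12} (by decide) (by decide) (by decide)
  · exact mkGood _ _ _ hW1 {16} (by decide) (by decide) (by decide)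
  · exact mkGood _ _ _ hW1 {8,9} (by decide) (by decide) (by decide)
  · exact mkGood _ _ _ hW1 {6,12} (by decide) (by decide) (by decide)
  · exact mkGood _ _ _ hW1 {3,16} (by decide) (by decide) (by decide)
  · exact mkGood _ _ _ hW1 {4,16} (by decide) (by decide) (by decide)
  · exact mkGood _ _ _ hW1 {9,12} (by decide) (by decide) (by decide)
  · exact mkGood _ _ _ hW1 {6,16} (by decide) (by decide) (by decide)
  · exact mkGood _ _ _ hW1 {3,4,16} (by decide) (by decide) (by decide)
  · exact mkGood _ _ _ hW1 {8,16} (by decide) (by decide) (by decide)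
  · exact mkGood _ _ _ hW1 {9,16} (by decide) (by decide) (by decide)
  · exact mkGood _ _ _ hW1 {4,6,16} (by decide) (by decide) (by decide)
  · exact mkGood _ _ _ hW1 {3,8,16} (by decide) (by decide) (by decide)
  · exact mkGood _ _ _ hW1 {12,16} (by decide) (by decide) (by decide)
  · exact mkGood _ _ _ hW1 {4,9,16} (by decide) (by decide) (by decide)
  · exact mkGood _ _ _ hW1 {6,8,16} (by decide) (by decide) (by decide)
  · exact mkGood _ _ _ hW1 {3,12,16} (by decide) (by decide) (by decide)
  · exact mkGood _ _ _ hW1 {4,12,16} (by decide) (by decide) (by decide)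
  · exact mkGood _ _ _ hW1 {8,9,16} (by decide) (by decide) (by decide)
  · exact mkGood _ _ _ hW1 {6,12,16} (by decide) (by decide) (by decide)
  · exact mkGood _ _ _ hW1 {3,4,12,16} (by decide) (by decide) (by decide)
  · exact mkGood _ _ _ hW1 {8,12,16} (by decide) (by decide) (by decide)
  · exact mkGood _ _ _ hW1 {9,12,16} (by decide) (by decide) (by decide)
  · exact mkGood _ _ _ hW1 {4,6,12,16} (by decide) (by decide) (by decide)
  · exact mkGood _ _ _ hW1 {3,8,12,16} (by decide) (by decide) (by decide)
  · exact mkGood _ _ _ hW1 {3,9,12,16} (by decide) (by decide) (by decide)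
  · exact mkGood _ _ _ hW1 {4,9,12,16} (by decide) (by decide) (by decide)
  · exact mkGood _ _ _ hW1 {6,8,12,16} (by decide) (by decide) (by decide)
  · exact mkGood _ _ _ hW1 {6,9,12,16} (by decide) (by decide) (by decide)
  · exact mkGood _ _ _ hW1 {3,4,9,12,16} (by decide) (by decide) (by decide)
  · exact mkGood _ _ _ hW1 {8,9,12,16} (by decide) (by decide) (by decide)
  · exact mkGood _ _ _ hW1 {3,6,9,12,16} (by decide) (by decide) (by decide)
  · exact mkGood _ _ _ hW1 {4,6,9,12,16} (by decide) (by decide) (by decide)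
  · exact mkGood _ _ _ hW1 {3,8,9,12,16} (by decide) (by decide) (by decide)
  · exact mkGood _ _ _ hW1 {4,8,9,12,16} (by decide) (by decide) (by decide)
  · exact mkGood _ _ _ hW1 {3,4,6,9,12,16} (by decide) (by decide) (by decide)
  · exact mkGood _ _ _ hW1 {6,8,9,12,16} (by decide) (by decide) (by decide)
  · exact mkGood _ _ _ hW1 {3,4,8,9,12,16} (by decide) (by decide) (by decide)

lemma base2 : ∀ n, 48 ≤ n → n + 48 ≤ 222 → Good 9 n := by
  intro n h1 h2
  have h2' : n ≤ 174 := by omega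
  clear h2
  interval_cases n
  · exact mkGood _ _ _ hW2 {48} (by decide) (by decide) (by decide)
  · exact mkGood _ _ _ hW2 {9,16,24} (by decide) (by decide) (by decide)
  · exact mkGood _ _ _ hW2 {18,32} (by decide) (by decide) (by decide)
  · exact mkGood _ _ _ hW2 {24,27} (by decide) (by decide) (by decide)
  · exact mkGood _ _ _ hW2 {16,36} (by decide) (by decide) (by decide)
  · exact mkGood _ _ _ hW2 {9,12,32} (by decide) (by decide) (by decide)
  · exact mkGood _ _ _ hW2 {18,36} (by decide) (by decide) (by decide)
  · exact mkGood _ _ _ hW2 {12,16,27} (by decide) (by decide) (by decide)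
  · exact mkGood _ _ _ hW2 {24,32} (by decide) (by decide) (by decide)
  · exact mkGood _ _ _ hW2 {9,48} (by decide) (by decide) (by decide)
  · exact mkGood _ _ _ hW2 {16,18,24} (by decide) (by decide) (by decide)
  · exact mkGood _ _ _ hW2 {27,32} (by decide) (by decide) (by decide)
  · exact mkGood _ _ _ hW2 {12,48} (by decide) (by decide) (by decide)
  · exact mkGood _ _ _ hW2 {9,16,36} (by decide) (by decide) (by decide)
  · exact mkGood _ _ _ hW2 {12,18,32} (by decide) (by decide) (by decide)
  · exact mkGood _ _ _ hW2 {27,36} (by decide) (by decide) (by decide)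
  · exact mkGood _ _ _ hW2 {16,48} (by decide) (by decide) (by decide)
  · exact mkGood _ _ _ hW2 {9,24,32} (by decide) (by decide) (by decide)
  · exact mkGood _ _ _ hW2 {18,48} (by decide) (by decide) (by decide)
  · exact mkGood _ _ _ hW2 {16,24,27} (by decide) (by decide) (by decide)
  · exact mkGood _ _ _ hW2 {32,36} (by decide) (by decide) (by decide)
  · exact mkGood _ _ _ hW2 {9,12,48} (by decide) (by decide) (by decide)
  · exact mkGood _ _ _ hW2 {16,18,36} (by decide) (by decide) (by decide)
  · exact mkGood _ _ _ hW2 {12,27,32} (by decide) (by decide) (by decide)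
  · exact mkGood _ _ _ hW2 {24,48} (by decide) (by decide) (by decide)
  · exact mkGood _ _ _ hW2 {9,16,48} (by decide) (by decide) (by decide)
  · exact mkGood _ _ _ hW2 {18,24,32} (by decide) (by decide) (by decide)
  · exact mkGood _ _ _ hW2 {27,48} (by decide) (by decide) (by decide)
  · exact mkGood _ _ _ hW2 {12,16,48} (by decide) (by decide) (by decide)
  · exact mkGood _ _ _ hW2 {9,32,36} (by decide) (by decide) (by decide)
  · exact mkGood _ _ _ hW2 {12,18,48} (by decide) (by decide) (by decide)
  · exact mkGood _ _ _ hW2 {16,27,36} (by decide) (by decide) (by decide)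
  · exact mkGood _ _ _ hW2 {32,48} (by decide) (by decide) (by decide)
  · exact mkGood _ _ _ hW2 {9,24,48} (by decide) (by decide) (by decide)
  · exact mkGood _ _ _ hW2 {16,18,48} (by decide) (by decide) (by decide)
  · exact mkGood _ _ _ hW2 {24,27,32} (by decide) (by decide) (by decide)
  · exact mkGood _ _ _ hW2 {36,48} (by decide) (by decide) (by decide)
  · exact mkGood _ _ _ hW2 {9,12,16,48} (by decide) (by decide) (by decide)
  · exact mkGood _ _ _ hW2 {18,32,36} (by decide) (by decide) (by decide)
  · exact mkGood _ _ _ hW2 {12,27,48} (by decide) (by decide) (by decide)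
  · exact mkGood _ _ _ hW2 {16,24,48} (by decide) (by decide) (by decide)
  · exact mkGood _ _ _ hW2 {9,32,48} (by decide) (by decide) (by decide)
  · exact mkGood _ _ _ hW2 {18,24,48} (by decide) (by decide) (by decide)
  · exact mkGood _ _ _ hW2 {16,27,48} (by decide) (by decide) (by decide)
  · exact mkGood _ _ _ hW2 {12,32,48} (by decide) (by decide) (by decide)
  · exact mkGood _ _ _ hW2 {9,36,48} (by decide) (by decide) (by decide)
  · exact mkGood _ _ _ hW2 {12,16,18,48} (by decide) (by decide) (by decide)
  · exact mkGood _ _ _ hW2 {27,32,36} (by decide) (by decide) (by decide)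
  · exact mkGood _ _ _ hW2 {12,36,48} (by decide) (by decide) (by decide)
  · exact mkGood _ _ _ hW2 {9,16,24,48} (by decide) (by decide) (by decide)
  · exact mkGood _ _ _ hW2 {18,32,48} (by decide) (by decide) (by decide)
  · exact mkGood _ _ _ hW2 {24,27,48} (by decide) (by decide) (by decide)
  · exact mkGood _ _ _ hW2 {16,36,48} (by decide) (by decide) (by decide)
  · exact mkGood _ _ _ hW2 {9,12,32,48} (by decide) (by decide) (by decide)
  · exact mkGood _ _ _ hW2 {18,36,48} (by decide) (by decide) (by decide)
  · exact mkGood _ _ _ hW2 {12,16,27,48} (by decide) (by decide) (by decide)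
  · exact mkGood _ _ _ hW2 {24,32,48} (by decide) (by decide) (by decide)
  · exact mkGood _ _ _ hW2 {9,12,36,48} (by decide) (by decide) (by decide)
  · exact mkGood _ _ _ hW2 {16,18,24,48} (by decide) (by decide) (by decide)
  · exact mkGood _ _ _ hW2 {27,32,48} (by decide) (by decide) (by decide)
  · exact mkGood _ _ _ hW2 {24,36,48} (by decide) (by decide) (by decide)
  · exact mkGood _ _ _ hW2 {9,16,36,48} (by decide) (by decide) (by decide)
  · exact mkGood _ _ _ hW2 {12,18,32,48} (by decide) (by decide) (by decide)
  · exact mkGood _ _ _ hW2 {27,36,48} (by decide) (by decide) (by decide)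
  · exact mkGood _ _ _ hW2 {12,16,36,48} (by decide) (by decide) (by decide)
  · exact mkGood _ _ _ hW2 {9,24,32,48} (by decide) (by decide) (by decide)
  · exact mkGood _ _ _ hW2 {12,18,36,48} (by decide) (by decide) (by decide)
  · exact mkGood _ _ _ hW2 {16,24,27,48} (by decide) (by decide) (by decide)
  · exact mkGood _ _ _ hW2 {32,36,48} (by decide) (by decide) (by decide)
  · exact mkGood _ _ _ hW2 {9,24,36,48} (by decide) (by decide) (by decide)
  · exact mkGood _ _ _ hW2 {16,18,36,48} (by decide) (by decide) (by decide)
  · exact mkGood _ _ _ hW2 {12,27,32,48} (by decide) (by decide) (by decide)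
  · exact mkGood _ _ _ hW2 {9,27,36,48} (by decide) (by decide) (by decide)
  · exact mkGood _ _ _ hW2 {9,12,16,36,48} (by decide) (by decide) (by decide)
  · exact mkGood _ _ _ hW2 {18,24,32,48} (by decide) (by decide) (by decide)
  · exact mkGood _ _ _ hW2 {12,27,36,48} (by decide) (by decide) (by decide)
  · exact mkGood _ _ _ hW2 {16,24,36,48} (by decide) (by decide) (by decide)
  · exact mkGood _ _ _ hW2 {9,32,36,48} (by decide) (by decide) (by decide)
  · exact mkGood _ _ _ hW2 {18,24,36,48} (by decide) (by decide) (by decide)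
  · exact mkGood _ _ _ hW2 {16,27,36,48} (by decide) (by decide) (by decide)
  · exact mkGood _ _ _ hW2 {12,32,36,48} (by decide) (by decide) (by decide)
  · exact mkGood _ _ _ hW2 {18,27,36,48} (by decide) (by decide) (by decide)
  · exact mkGood _ _ _ hW2 {12,16,18,36,48} (by decide) (by decide) (by decide)
  · exact mkGood _ _ _ hW2 {24,27,32,48} (by decide) (by decide) (by decide)
  · exact mkGood _ _ _ hW2 {16,32,36,48} (by decide) (by decide) (by decide)
  · exact mkGood _ _ _ hW2 {9,16,24,36,48} (by decide) (by decide) (by decide)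
  · exact mkGood _ _ _ hW2 {18,32,36,48} (by decide) (by decide) (by decide)
  · exact mkGood _ _ _ hW2 {24,27,36,48} (by decide) (by decide) (by decide)
  · exact mkGood _ _ _ hW2 {9,16,27,36,48} (by decide) (by decide) (by decide)
  · exact mkGood _ _ _ hW2 {9,12,32,36,48} (by decide) (by decide) (by decide)
  · exact mkGood _ _ _ hW2 {9,18,27,36,48} (by decide) (by decide) (by decide)
  · exact mkGood _ _ _ hW2 {12,16,27,36,48} (by decide) (by decide) (by decide)
  · exact mkGood _ _ _ hW2 {24,32,36,48} (by decide) (by decide) (by decide)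
  · exact mkGood _ _ _ hW2 {9,16,32,36,48} (by decide) (by decide) (by decide)
  · exact mkGood _ _ _ hW2 {16,18,24,36,48} (by decide) (by decide) (by decide)
  · exact mkGood _ _ _ hW2 {27,32,36,48} (by decide) (by decide) (by decide)
  · exact mkGood _ _ _ hW2 {9,24,27,36,48} (by decide) (by decide) (by decide)
  · exact mkGood _ _ _ hW2 {16,18,27,36,48} (by decide) (by decide) (by decide)
  · exact mkGood _ _ _ hW2 {12,18,32,36,48} (by decide) (by decide) (by decide)
  · exact mkGood _ _ _ hW2 {12,24,27,36,48} (by decide) (by decide) (by decide)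
  · exact mkGood _ _ _ hW2 {9,12,16,27,36,48} (by decide) (by decide) (by decide)
  · exact mkGood _ _ _ hW2 {9,24,32,36,48} (by decide) (by decide) (by decide)
  · exact mkGood _ _ _ hW2 {16,18,32,36,48} (by decide) (by decide) (by decide)
  · exact mkGood _ _ _ hW2 {16,24,27,36,48} (by decide) (by decide) (by decide)
  · exact mkGood _ _ _ hW2 {9,27,32,36,48} (by decide) (by decide) (by decide)
  · exact mkGood _ _ _ hW2 {18,24,27,36,48} (by decide) (by decide) (by decide)
  · exact mkGood _ _ _ hW2 {9,16,18,27,36,48} (by decide) (by decide) (by decide)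
  · exact mkGood _ _ _ hW2 {12,27,32,36,48} (by decide) (by decide) (by decide)
  · exact mkGood _ _ _ hW2 {16,24,32,36,48} (by decide) (by decide) (by decide)
  · exact mkGood _ _ _ hW2 {12,16,18,27,36,48} (by decide) (by decide) (by decide)
  · exact mkGood _ _ _ hW2 {18,24,32,36,48} (by decide) (by decide) (by decide)
  · exact mkGood _ _ _ hW2 {16,27,32,36,48} (by decide) (by decide) (by decide)
  · exact mkGood _ _ _ hW2 {9,16,24,27,36,48} (by decide) (by decide) (by decide)
  · exact mkGood _ _ _ hW2 {18,27,32,36,48} (by decide) (by decide) (by decide)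
  · exact mkGood _ _ _ hW2 {9,18,24,27,36,48} (by decide) (by decide) (by decide)
  · exact mkGood _ _ _ hW2 {12,16,24,27,36,48} (by decide) (by decide) (by decide)
  · exact mkGood _ _ _ hW2 {9,12,27,32,36,48} (by decide) (by decide) (by decide)
  · exact mkGood _ _ _ hW2 {9,16,24,32,36,48} (by decide) (by decide) (by decide)
  · exact mkGood _ _ _ hW2 {9,12,16,18,27,36,48} (by decide) (by decide) (by decide)
  · exact mkGood _ _ _ hW2 {24,27,32,36,48} (by decide) (by decide) (by decide)
  · exact mkGood _ _ _ hW2 {9,16,27,32,36,48} (by decide) (by decide) (by decide)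
  · exact mkGood _ _ _ hW2 {16,18,24,27,36,48} (by decide) (by decide) (by decide)
  · exact mkGood _ _ _ hW2 {9,18,27,32,36,48} (by decide) (by decide) (by decide)
  · exact mkGood _ _ _ hW2 {12,16,27,32,36,48} (by decide) (by decide) (by decide)
  · exact mkGood _ _ _ hW2 {9,12,16,24,27,36,48} (by decide) (by decide) (by decide)
  · exact mkGood _ _ _ hW2 {12,18,27,32,36,48} (by decide) (by decide) (by decide)
  · exact mkGood _ _ _ hW2 {16,18,24,32,36,48} (by decide) (by decide) (by decide)

lemma fam0 : ∀ a n, An 1 1 a ≤ n → n + An 1 1 a ≤ Sn 1 10 a → Good (2 ^ a) n := by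
  have h := main 1 1 10 0 (by norm_num) (by norm_num) (by norm_num) base0
  intro a n h1 h2
  have := h a n h1 h2
  rwa [one_mul] at this

lemma fam1 : ∀ a n, An 3 6 a ≤ n → n + An 3 6 a ≤ Sn 3 58 a → Good (3 * 2 ^ a) n :=
  main 3 6 58 1 (by norm_num) (by norm_num) (by norm_num) base1

lemma fam2 : ∀ a n, An 9 48 a ≤ n → n + An 9 48 a ≤ Sn 9 222 a → Good (9 * 2 ^ a) n :=
  main 9 48 222 2 (by norm_num) (by norm_num) (by norm_num) base2


lemma EE1 (x : ℕ) : EE (x + 1) = 2 * EE x + pp (x + 1) := rfl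
lemma EE2 (x : ℕ) : EE (x + 2) = 2 * EE (x + 1) + pp (x + 2) := rfl
lemma EE3 (x : ℕ) : EE (x + 3) = 2 * EE (x + 2) + pp (x + 3) := rfl
lemma EE4 (x : ℕ) : EE (x + 4) = 2 * EE (x + 3) + pp (x + 4) := rfl

lemma R1 (x : ℕ) (hx : 4 ≤ x) :
    An 9 48 x + An 1 1 (x + 3) ≤ Sn 1 10 (x + 3) + 1 := by
  have hInv := INV (x + 3)
  have hE := EE_ge x
  have hEx : 4 * 2 ^ x ≤ EE x := le_trans (Nat.mul_le_mul_right _ hx) hE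
  have e1 := EE1 x; have e2 := EE2 x; have e3 := EE3 x
  have q1 : (2:ℕ) ^ (x + 1) = 2 * 2 ^ x := by ring
  have q2 : (2:ℕ) ^ (x + 2) = 4 * 2 ^ x := by ring
  have q3 : (2:ℕ) ^ (x + 3) = 8 * 2 ^ x := by ring
  unfold An Sn
  omega

lemma R2 (x : ℕ) : An 3 6 (x + 2) + An 9 48 x ≤ Sn 9 222 x + 1 := by
  have hInv := INV x
  have e1 := EE1 x; have e2 := EE2 x
  have hub2 := pp_ub (x + 2)
  have hub1 := pp_ub (x + 1)
  have q1 : (2:ℕ) ^ (x + 1) = 2 * 2 ^ x := by ring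
  have q2 : (2:ℕ) ^ (x + 2) = 4 * 2 ^ x := by ring
  unfold An Sn
  omega

lemma R3 (x : ℕ) : An 9 48 (x + 1) + An 3 6 (x + 2) ≤ Sn 3 58 (x + 2) + 1 := by
  have hInv := INV (x + 2)
  have e1 := EE1 x; have e2 := EE2 x
  have hub3 := pp_ub (x + 3)
  have q1 : (2:ℕ) ^ (x + 1) = 2 * 2 ^ x := by ring
  have q2 : (2:ℕ) ^ (x + 2) = 4 * 2 ^ x := by ring
  have q3 : (2:ℕ) ^ (x + 3) = 8 * 2 ^ x := by ring
  unfold An Sn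
  omega

lemma R4 (x : ℕ) : An 1 1 (x + 4) + An 9 48 (x + 1) ≤ Sn 9 222 (x + 1) + 1 := by
  have hInv := INV (x + 1)
  have e1 := EE1 x; have e2 := EE2 x; have e3 := EE3 x; have e4 := EE4 x
  have hub2 := pp_ub (x + 2)
  have hub3 := pp_ub (x + 3)
  have hub4 := pp_ub (x + 4)
  have q1 : (2:ℕ) ^ (x + 1) = 2 * 2 ^ x := by ring
  have q2 : (2:ℕ) ^ (x + 2) = 4 * 2 ^ x := by ring
  have q3 : (2:ℕ) ^ (x + 3) = 8 * 2 ^ x := by ring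
  have q4 : (2:ℕ) ^ (x + 4) = 16 * 2 ^ x := by ring
  unfold An Sn
  omega

lemma twoA0 (y : ℕ) : 2 * An 1 1 y ≤ Sn 1 10 y := by
  have := Jlem 1 1 10 (by norm_num) y
  omega

lemma octave (x n : ℕ) (hx : 4 ≤ x) (h1 : An 1 1 (x + 3) ≤ n)
    (h2 : n ≤ An 1 1 (x + 4)) : ∃ t, 1 ≤ t ∧ Good t n := by
  by_cases c1 : n + An 1 1 (x + 3) ≤ Sn 1 10 (x + 3)
  · exact ⟨2 ^ (x + 3), Nat.one_le_two_pow, fam0 _ _ h1 c1⟩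
  by_cases c2 : n + An 9 48 x ≤ Sn 9 222 x
  · refine ⟨9 * 2 ^ x, by have := Nat.one_le_two_pow (n := x); omega, fam2 _ _ ?_ c2⟩
    have := R1 x hx; omega
  by_cases c3 : n + An 3 6 (x + 2) ≤ Sn 3 58 (x + 2)
  · refine ⟨3 * 2 ^ (x + 2), by have := Nat.one_le_two_pow (n := x + 2); omega, fam1 _ _ ?_ c3⟩
    have := R2 x; omega
  by_cases c4 : n + An 9 48 (x + 1) ≤ Sn 9 222 (x + 1)
  · refine ⟨9 * 2 ^ (x + 1), by have := Nat.one_le_two_pow (n := x + 1); omega, fam2 _ _ ?_ c4⟩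
    have := R3 x; omega
  · refine ⟨2 ^ (x + 4), Nat.one_le_two_pow, fam0 _ _ ?_ ?_⟩
    · have := R4 x; omega
    · have := twoA0 (x + 4); omega

lemma An0_strictmono : StrictMono (An 1 1) := by
  apply strictMono_nat_of_lt_succ
  intro a
  have e1 := EE1 a
  have hp := pp_lb (a + 1)
  have q1 : (2:ℕ) ^ (a + 1) = 2 * 2 ^ a := by ring
  unfold An
  have h2 : (1:ℕ) ≤ 2 ^ a := Nat.one_le_two_pow
  omega

lemma cover_small (n : ℕ) (h1 : 1 ≤ n) (h2 : n ≤ 1696) : ∃ t, 1 ≤ t ∧ Good t n := by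
  have v0 : An 1 1 0 = 1 := rfl
  have s0 : Sn 1 10 0 = 10 := rfl
  have v1 : An 1 1 1 = 5 := rfl
  have s1 : Sn 1 10 1 = 32 := rfl
  have v2 : An 1 1 2 = 19 := rfl
  have s2 : Sn 1 10 2 = 73 := rfl
  have v3 : An 1 1 3 = 47 := rfl
  have s3 : Sn 1 10 3 = 182 := rfl
  have v4 : An 1 1 4 = 121 := rfl
  have s4 : Sn 1 10 4 = 472 := rfl
  have v5 : An 1 1 5 = 323 := rfl
  have s5 : Sn 1 10 5 = 1025 := rfl
  have v6 : An 1 1 6 = 727 := rfl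
  have s6 : Sn 1 10 6 = 2374 := rfl
  have w5 : An 3 6 5 = 1065 := rfl
  have t5 : Sn 3 58 5 = 3971 := rfl
  have w4 : An 3 6 4 = 411 := rfl
  have t4 : Sn 3 58 4 = 1864 := rfl
  by_cases h : n ≤ 9
  · exact ⟨1, le_refl 1, by simpa using fam0 0 n (by omega) (by omega)⟩
  by_cases h' : n ≤ 27
  · exact ⟨2 ^ 1, by norm_num, fam0 1 n (by omega) (by omega)⟩
  by_cases h'' : n ≤ 54
  · exact ⟨2 ^ 2, by norm_num, fam0 2 n (by omega) (by omega)⟩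
  by_cases h3 : n ≤ 135
  · exact ⟨2 ^ 3, by norm_num, fam0 3 n (by omega) (by omega)⟩
  by_cases h4 : n ≤ 351
  · exact ⟨2 ^ 4, by norm_num, fam0 4 n (by omega) (by omega)⟩
  by_cases h5 : n ≤ 702
  · exact ⟨2 ^ 5, by norm_num, fam0 5 n (by omega) (by omega)⟩
  by_cases h6 : n ≤ 1453
  · exact ⟨3 * 2 ^ 4, by norm_num, fam1 4 n (by omega) (by omega)⟩
  · exact ⟨3 * 2 ^ 5, by norm_num, fam1 5 n (by omega) (by omega)⟩

lemma cover (n : ℕ) (h1 : 1 ≤ n) : ∃ t, 1 ≤ t ∧ Good t n := by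
  by_cases hsm : n ≤ 1696
  · exact cover_small n h1 hsm
  · have hup : ∃ y, n < An 1 1 (y + 1) := by
      refine ⟨n, ?_⟩
      have h2 : n < 2 ^ (n + 1) := by
        calc n < 2 ^ n := Nat.lt_two_pow_self
        _ ≤ 2 ^ (n + 1) := Nat.pow_le_pow_right (by norm_num) (by omega)
      have : 2 ^ (n + 1) ≤ An 1 1 (n + 1) := by
        unfold An; omega
      omega
    set y := Nat.find hup with hydef
    have hy : n < An 1 1 (y + 1) := Nat.find_spec hup
    have hA7 : An 1 1 7 = 1697 := rfl
    have hy7 : 7 ≤ y := by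
      by_contra hc
      push_neg at hc
      have : An 1 1 (y + 1) ≤ An 1 1 7 := An0_strictmono.monotone (by omega)
      omega
    have hAy : An 1 1 y ≤ n := by
      have := Nat.find_min hup (show y - 1 < y by omega)
      have heq : y - 1 + 1 = y := by omega
      rw [heq] at this
      omega
    have hx : 4 ≤ y - 3 := by omega
    have e3 : y - 3 + 3 = y := by omega
    have e4 : y - 3 + 4 = y + 1 := by omega
    exact octave (y - 3) n hx (by rw [e3]; exact hAy) (by rw [e4]; omega)

end S3aux

theorem smooth3_small_spacing (n : ℕ) (hn : 0 < n) :
    ∃ B : Finset ℕ, ∃ hB : B.Nonempty,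
      (∀ b ∈ B, ∃ x y : ℕ, b = 2 ^ x * 3 ^ y) ∧
      (∑ b ∈ B, b) = n ∧
      (∀ b ∈ B, b < 6 * B.min' hB) := by
  obtain ⟨t, ht, B, hne, hsm, hsum, hbd⟩ := S3aux.cover n hn
  refine ⟨B, hne, hsm, hsum, ?_⟩
  intro b hb
  have hmin : t ≤ B.min' hne := Finset.le_min' _ _ _ (fun y hy => (hbd y hy).1)
  have h6 := (hbd b hb).2
  omega
end

section
/- For every odd integer p > 1, there exists a constant C (depending on p) such that every positive integer n can be written as a sum n = b₁ + ... + b_r of distinct elements of A_p with b₁ < b₂ < ... < b_r < C·b₁. -/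
lemma binary_rep (n : ℕ) : ∃ S : Finset ℕ, (∀ s ∈ S, ∃ i : ℕ, s = 2^i) ∧
    (∑ s ∈ S, s) = n ∧ ∀ s ∈ S, s ≤ n := by
  induction n using Nat.strong_induction_on with
  | _ n ih =>
    rcases Nat.eq_zero_or_pos n with h0 | h0
    · exact ⟨∅, by simp, by simp [h0], by simp⟩
    · have hne : n ≠ 0 := h0.ne'
      have h1 : 2 ^ n.log2 ≤ n := Nat.log2_self_le hne
      have h2 : n < 2 ^ (n.log2 + 1) := Nat.lt_log2_self
      have h3 : n - 2 ^ n.log2 < n := by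
        have : 0 < 2 ^ n.log2 := pow_pos (by norm_num) _
        omega
      obtain ⟨S, hS1, hS2, hS3⟩ := ih _ h3
      have hnotmem : 2 ^ n.log2 ∉ S := by
        intro hmem
        have h4 := hS3 _ hmem
        have h5 : 2 ^ (n.log2 + 1) = 2 * 2 ^ n.log2 := by ring
        omega
      refine ⟨insert (2 ^ n.log2) S, ?_, ?_, ?_⟩
      · intro s hs
        rcases Finset.mem_insert.mp hs with h | h
        · exact ⟨n.log2, h⟩
        · exact hS1 s h
      · rw [Finset.sum_insert hnotmem, hS2]; omega
      · intro s hs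
        rcases Finset.mem_insert.mp hs with h | h
        · omega
        · have := hS3 s h; omega

lemma main_rep (p : ℕ) (hp3 : 3 ≤ p) (hodd : p % 2 = 1) :
    ∀ Y n : ℕ, 2*p*(Y+1)*p^Y ≤ n → n ≤ 4*p^2*(Y+1)*p^Y →
    ∃ B : Finset ℕ, (∀ b ∈ B, ∃ x y : ℕ, b = 2^x * p^y) ∧
      (∑ b ∈ B, b) = n ∧ ∀ b ∈ B, p^Y ≤ b ∧ b ≤ 2^(2*p+4) * p^Y := by
  have hp2pow : p < 2^p := Nat.lt_two_pow_self
  have hbig : 8*p^2 + 2*p ≤ 2^(2*p+4) := by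
    have h1 : 2^(2*p+4) = 16*(2^p * 2^p) := by
      rw [pow_add, two_mul, pow_add]; ring
    have h2 : p*p ≤ 2^p * 2^p := Nat.mul_le_mul hp2pow.le hp2pow.le
    have h3 : 2*p ≤ p*p := by nlinarith
    nlinarith [h2, h3]
  intro Y
  induction Y with
  | zero =>
    intro n hl hu
    obtain ⟨S, hS1, hS2, hS3⟩ := binary_rep n
    refine ⟨S, ?_, hS2, ?_⟩
    · intro s hs
      obtain ⟨i, hi⟩ := hS1 s hs
      exact ⟨i, 0, by simp [hi]⟩
    · intro s hs
      obtain ⟨i, hi⟩ := hS1 s hs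
      have hs1 : 1 ≤ s := by rw [hi]; exact Nat.one_le_two_pow
      have hs2 : s ≤ n := hS3 s hs
      constructor
      · simpa using hs1
      · have : n ≤ 4*p^2 := by simpa using hu
        have : 4*p^2 ≤ 2^(2*p+4) := by nlinarith [hbig]
        simp only [pow_zero, mul_one]
        omega
  | succ Y ih =>
    intro n hl hu
    haveI : NeZero p := ⟨by omega⟩
    set P := p^(Y+1) with hPdef
    have hPpos : 0 < P := pow_pos (by omega) _
    set u := Nat.log2 P + 1 with hudef
    set E := 2^u with hEdef
    have hE1 : P < E := Nat.lt_log2_self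
    have hE2 : E ≤ 2 * P := by
      have hll : 2 ^ Nat.log2 P ≤ P := Nat.log2_self_le hPpos.ne'
      have : E = 2 * 2 ^ Nat.log2 P := by rw [hEdef, hudef, pow_succ]; ring
      omega
    have hEpos : 0 < E := by omega
    -- abbreviations
    set A1 := 4*p^2*(Y+1)*P with hA1def
    set L1 := 2*p*(Y+1)*P with hL1def
    set q2p := 2*p*P with hq2pdef
    have hrel1 : 2*p*(Y+1+1)*P = L1 + q2p := by rw [hL1def, hq2pdef]; ring
    have hrel2 : 4*p^2*(Y+1+1)*P = A1 + 4*p^2*P := by rw [hA1def]; ring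
    have hLqA : L1 + q2p ≤ A1 := by
      rw [hL1def, hq2pdef, hA1def]
      have hstep : 2*p*(Y+1) + 2*p ≤ 4*p^2*(Y+1) := by
        have h1 : 2*p*(Y+1) + 2*p ≤ 4*p*(Y+1) := by ring_nf; omega
        have h2 : 4*p*(Y+1) ≤ 4*p^2*(Y+1) := by
          have : 4*p ≤ 4*p^2 := by nlinarith
          exact Nat.mul_le_mul_right _ this
        omega
      calc 2*p*(Y+1)*P + 2*p*P = (2*p*(Y+1) + 2*p)*P := by ring
        _ ≤ (4*p^2*(Y+1))*P := Nat.mul_le_mul_right P hstep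
    have hl' : L1 + q2p ≤ n := by rw [← hrel1]; exact hl
    have hu' : n ≤ A1 + 4*p^2*P := by rw [← hrel2]; exact hu
    -- digit choice
    set x0 := n - A1 with hx0def
    set c_min := (x0 + E - 1) / E with hcmdef
    have hcm_ge : x0 ≤ c_min * E := by
      have hdm := Nat.div_add_mod (x0 + E - 1) E
      have hmlt : (x0 + E - 1) % E < E := Nat.mod_lt _ hEpos
      have : c_min * E = E * ((x0 + E - 1)/E) := by rw [hcmdef]; ring
      omega
    have hcm_le : c_min * E ≤ x0 + E - 1 := Nat.div_mul_le_self _ _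
    have hx0le : x0 ≤ 4*p^2*P := by omega
    have hcm_bound : c_min ≤ 4*p^2 := by
      have h4 : 4*p^2*P ≤ 4*p^2*E := Nat.mul_le_mul_left _ hE1.le
      have h5 : c_min * E < (4*p^2+1) * E := by
        have he : (4*p^2+1)*E = 4*p^2*E + E := by ring
        omega
      have h6 := Nat.lt_of_mul_lt_mul_right h5
      omega
    -- residue
    have hcop2 : Nat.Coprime 2 p := by
      exact Nat.coprime_two_left.mpr (Nat.odd_iff.mpr hodd)
    have hcop : Nat.Coprime E p := by rw [hEdef]; exact hcop2.pow_left u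
    have hunit : IsUnit ((E : ℕ) : ZMod p) := (ZMod.isUnit_iff_coprime E p).mpr hcop
    set vu := hunit.unit with hvudef
    have hvu : (vu : ZMod p) = ((E : ℕ) : ZMod p) := hunit.unit_spec
    set zδ : ZMod p := ((n : ZMod p) - (c_min : ℕ) * ((E:ℕ) : ZMod p)) * ↑vu⁻¹ with hzddef
    set δ := zδ.val with hddef
    have hdlt : δ < p := ZMod.val_lt _
    set c := c_min + δ with hcdef
    have hc_bound : c ≤ 4*p^2 + p := by omega
    -- upper bound on c*E, giving room
    have hpE : p * E ≤ q2p := by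
      rw [hq2pdef]
      calc p * E ≤ p * (2*P) := Nat.mul_le_mul_left p hE2
        _ = 2*p*P := by ring
    have hcE_room : c * E + L1 ≤ n := by
      have h1 : c * E = c_min * E + δ * E := by rw [hcdef]; ring
      have h2 : δ * E ≤ (p-1) * E := Nat.mul_le_mul_right E (by omega)
      have h3 : E + (p-1)*E = p * E := by
        have hp1 : 1 + (p-1) = p := by omega
        calc E + (p-1)*E = (1 + (p-1))*E := by ring
          _ = p * E := by rw [hp1]
      omega
    have hcE_le : c * E ≤ n := by omega
    -- divisibility
    have hcast : ((n - c*E : ℕ) : ZMod p) = 0 := by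
      rw [Nat.cast_sub hcE_le]
      have h1 : ((c*E : ℕ) : ZMod p) = ((c_min : ℕ) + ((δ:ℕ) : ZMod p)) * ((E:ℕ) : ZMod p) := by
        push_cast [hcdef]; ring
      have h2 : ((δ:ℕ) : ZMod p) = zδ := by
        rw [hddef, ZMod.natCast_val, ZMod.cast_id]
      rw [h1, h2, hzddef, ← hvu]
      have : ((c_min:ℕ) + ((n:ZMod p) - (c_min:ℕ) * ↑vu) * ↑vu⁻¹) * ↑vu
          = (c_min:ℕ) * ↑vu + ((n:ZMod p) - (c_min:ℕ) * ↑vu) * ↑vu⁻¹ * ↑vu := by ring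
      rw [this, Units.inv_mul_cancel_right]
      ring
    have hdvd : p ∣ n - c*E := (ZMod.natCast_eq_zero_iff _ _).mp hcast
    obtain ⟨m, hm⟩ := hdvd
    -- bounds on m
    have hmlow : 2*p*(Y+1)*p^Y ≤ m := by
      have h1 : p * (2*p*(Y+1)*p^Y) = L1 := by rw [hL1def, hPdef]; ring
      have h2 : L1 ≤ p * m := by omega
      rw [← h1] at h2
      exact Nat.le_of_mul_le_mul_left h2 (by omega)
    have hmhigh : m ≤ 4*p^2*(Y+1)*p^Y := by
      have h0 : c_min * E ≤ c * E := Nat.mul_le_mul_right E (by omega)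
      have h1 : p * m ≤ A1 := by omega
      have h2 : p * (4*p^2*(Y+1)*p^Y) = A1 := by rw [hA1def, hPdef]; ring
      rw [← h2] at h1
      exact Nat.le_of_mul_le_mul_left h1 (by omega)
    obtain ⟨B', hB'1, hB'2, hB'3⟩ := ih m hmlow hmhigh
    obtain ⟨S, hS1, hS2, hS3⟩ := binary_rep c
    refine ⟨(B'.image (fun b => p * b)) ∪ (S.image (fun s => E * s)), ?_, ?_, ?_⟩
    · -- membership form
      intro b hb
      rcases Finset.mem_union.mp hb with hb | hb
      · obtain ⟨b', hb', rfl⟩ := Finset.mem_image.mp hb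
        obtain ⟨x, y, hxy⟩ := hB'1 b' hb'
        exact ⟨x, y+1, by rw [hxy]; ring⟩
      · obtain ⟨s, hs, rfl⟩ := Finset.mem_image.mp hb
        obtain ⟨i, hi⟩ := hS1 s hs
        exact ⟨u+i, 0, by rw [hi, hEdef]; rw [pow_add]; ring⟩
    · -- sum
      have hdisj : Disjoint (B'.image (fun b => p * b)) (S.image (fun s => E * s)) := by
        rw [Finset.disjoint_left]
        intro a ha1 ha2
        obtain ⟨b', hb', hbe⟩ := Finset.mem_image.mp ha1
        obtain ⟨s, hs, hse⟩ := Finset.mem_image.mp ha2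
        obtain ⟨i, hi⟩ := hS1 s hs
        have hdvda : p ∣ a := ⟨b', hbe.symm⟩
        have ha2pow : a = 2^(u+i) := by rw [← hse, hi, hEdef, ← pow_add]
        have hcopa : Nat.Coprime p (2^(u+i)) := (Nat.coprime_comm.mp hcop2).pow_right _
        rw [ha2pow] at hdvda
        have hp1 : p = 1 := Nat.Coprime.eq_one_of_dvd hcopa hdvda
        omega
      rw [Finset.sum_union hdisj, Finset.sum_image (by
          intro x hx y hy hxy
          exact Nat.eq_of_mul_eq_mul_left (by omega) hxy),
        Finset.sum_image (by
          intro x hx y hy hxy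
          exact Nat.eq_of_mul_eq_mul_left hEpos hxy)]
      rw [← Finset.mul_sum, ← Finset.mul_sum, hB'2, hS2]
      have hn : n = p*m + c*E := (Nat.sub_eq_iff_eq_add hcE_le).mp hm
      rw [hn]; ring
    · -- window
      intro b hb
      rcases Finset.mem_union.mp hb with hb | hb
      · obtain ⟨b', hb', rfl⟩ := Finset.mem_image.mp hb
        obtain ⟨hlo, hhi⟩ := hB'3 b' hb'
        constructor
        · calc p^(Y+1) = p * p^Y := by ring
            _ ≤ p * b' := Nat.mul_le_mul_left p hlo
        · calc p * b' ≤ p * (2^(2*p+4) * p^Y) := Nat.mul_le_mul_left p hhi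
            _ = 2^(2*p+4) * p^(Y+1) := by ring
      · obtain ⟨s, hs, rfl⟩ := Finset.mem_image.mp hb
        obtain ⟨i, hi⟩ := hS1 s hs
        have hs1 : 1 ≤ s := by rw [hi]; exact Nat.one_le_two_pow
        have hsc : s ≤ c := hS3 s hs
        constructor
        · calc p^(Y+1) ≤ E := by omega
            _ ≤ E * s := Nat.le_mul_of_pos_right E hs1
        · calc E * s ≤ E * c := Nat.mul_le_mul_left E hsc
            _ ≤ (2*P) * (4*p^2 + p) := Nat.mul_le_mul hE2 hc_bound
            _ = (8*p^2 + 2*p) * P := by ring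
            _ ≤ 2^(2*p+4) * P := Nat.mul_le_mul_right P hbig

theorem Ap_small_spacing (p : ℕ) (hp : Odd p) (hp1 : 1 < p) :
    ∃ C : ℝ, ∀ n : ℕ, 0 < n →
      ∃ B : Finset ℕ, ∃ hB : B.Nonempty,
        (∀ b ∈ B, ∃ x y : ℕ, b = 2 ^ x * p ^ y) ∧
        (∑ b ∈ B, b) = n ∧
        (∀ b ∈ B, (b : ℝ) < C * (B.min' hB : ℝ)) := by
  have hodd : p % 2 = 1 := Nat.odd_iff.mp hp
  have hp3 : 3 ≤ p := by omega
  refine ⟨(2^(2*p+4) : ℝ) + 2*p, ?_⟩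
  intro n hn
  by_cases hsmall : n < 2*p
  · obtain ⟨S, hS1, hS2, hS3⟩ := binary_rep n
    have hSne : S.Nonempty := by
      rcases Finset.eq_empty_or_nonempty S with h | h
      · exfalso; rw [h] at hS2; simp at hS2; omega
      · exact h
    refine ⟨S, hSne, ?_, hS2, ?_⟩
    · intro b hb; obtain ⟨i, hi⟩ := hS1 b hb; exact ⟨i, 0, by simp [hi]⟩
    · intro b hb
      have hb1 : 1 ≤ S.min' hSne := by
        have hm := S.min'_mem hSne
        obtain ⟨i, hi⟩ := hS1 _ hm
        rw [hi]; exact Nat.one_le_two_pow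
      have hbn : b ≤ n := hS3 b hb
      have h1 : (1:ℝ) ≤ (S.min' hSne : ℝ) := by exact_mod_cast hb1
      have hC : (n:ℝ) < 2^(2*p+4) + 2*p := by
        have h2 : (n:ℝ) < 2*p := by exact_mod_cast hsmall
        have h3 : (0:ℝ) < 2^(2*p+4) := by positivity
        linarith
      calc (b:ℝ) ≤ (n:ℝ) := by exact_mod_cast hbn
        _ < 2^(2*p+4) + 2*p := hC
        _ = (2^(2*p+4) + 2*p) * 1 := by ring
        _ ≤ (2^(2*p+4) + 2*p) * (S.min' hSne : ℝ) := by
            apply mul_le_mul_of_nonneg_left h1 (by positivity)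
  · push_neg at hsmall
    set Y := Nat.findGreatest (fun Y => 2*p*(Y+1)*p^Y ≤ n) n with hYdef
    have h00 : (fun Y => 2*p*(Y+1)*p^Y ≤ n) 0 := by simpa using hsmall
    have hY : 2*p*(Y+1)*p^Y ≤ n := by
      have h01 := Nat.findGreatest_spec (P := fun Y => 2*p*(Y+1)*p^Y ≤ n) (Nat.zero_le n) h00
      rw [← hYdef] at h01
      exact h01
    have hYlt : Y + 1 ≤ n := by
      have hpY : 0 < p^Y := pow_pos (by omega) _
      have h1 : Y+1 ≤ 2*p*(Y+1) := by nlinarith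
      have h2 : 2*p*(Y+1) ≤ 2*p*(Y+1)*p^Y := Nat.le_mul_of_pos_right _ hpY
      omega
    have hYnot : ¬ (2*p*(Y+1+1)*p^(Y+1) ≤ n) := by
      have hlt : Nat.findGreatest (fun Y => 2*p*(Y+1)*p^Y ≤ n) n < Y+1 := by
        rw [← hYdef]; exact Nat.lt_succ_self Y
      have h02 := Nat.findGreatest_is_greatest hlt hYlt
      exact h02
    have hu : n ≤ 4*p^2*(Y+1)*p^Y := by
      push_neg at hYnot
      have h1 : 2*p*(Y+1+1)*p^(Y+1) ≤ 4*p^2*(Y+1)*p^Y := by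
        calc 2*p*(Y+1+1)*p^(Y+1) = (2*p^2*(Y+2))*p^Y := by ring
          _ ≤ (2*p^2*(2*(Y+1)))*p^Y := by
              apply Nat.mul_le_mul_right
              apply Nat.mul_le_mul_left
              omega
          _ = 4*p^2*(Y+1)*p^Y := by ring
      omega
    obtain ⟨B, hB1, hB2, hB3⟩ := main_rep p hp3 hodd Y n hY hu
    have hBne : B.Nonempty := by
      rcases Finset.eq_empty_or_nonempty B with h | h
      · exfalso; rw [h] at hB2; simp at hB2; omega
      · exact h
    refine ⟨B, hBne, hB1, hB2, ?_⟩
    intro b hb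
    have hminB := B.min'_mem hBne
    have hmin_lo : p^Y ≤ B.min' hBne := (hB3 _ hminB).1
    have hb_hi : b ≤ 2^(2*p+4)*p^Y := (hB3 b hb).2
    have hpYpos : (0:ℝ) < ((p^Y : ℕ) : ℝ) := by
      have : 0 < p^Y := pow_pos (by omega) _
      exact_mod_cast this
    have hppos : (0:ℝ) < (p:ℝ) := by positivity
    calc (b:ℝ) ≤ ((2^(2*p+4)*p^Y : ℕ) : ℝ) := by exact_mod_cast hb_hi
      _ = (2^(2*p+4) : ℝ) * ((p^Y : ℕ) : ℝ) := by push_cast; ring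
      _ < (2^(2*p+4) + 2*p) * ((p^Y : ℕ) : ℝ) := by nlinarith
      _ ≤ (2^(2*p+4) + 2*p) * (B.min' hBne : ℝ) := by
          apply mul_le_mul_of_nonneg_left
          · exact_mod_cast hmin_lo
          · positivity
end

section
/- For every odd integer p > 1, and every constant C with 1 < C < p, there exists a positive integer n that cannot be written as a sum n = b₁ + ... + b_r of distinct elements of A_p with b₁ < ... < b_r < C·b₁. -/
set_option maxHeartbeats 1000000

open Real


lemma two_pow_ne_ppow_nat {p : ℕ} (hp : Odd p) {q j : ℕ} (hq : 0 < q) :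
    (2:ℕ)^q ≠ p^j := by
  intro h
  have h2 : Even ((2:ℕ)^q) := (Nat.even_pow).2 ⟨even_two, hq.ne'⟩
  rw [h] at h2
  rcases Nat.even_pow.1 h2 with ⟨he, _⟩
  exact (Nat.not_even_iff_odd.2 hp) he

lemma two_pow_ne_ppow_real {p : ℕ} (hp : Odd p) (hp1 : 1 < p) {q : ℕ} {j : ℤ} (hq : 0 < q) :
    (2:ℝ)^q ≠ (p:ℝ)^j := by
  intro h
  rcases le_or_gt j 0 with hj | hj
  · have h1 : (p:ℝ)^j ≤ 1 :=
      zpow_le_one_of_nonpos₀ (by exact_mod_cast hp1.le) hj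
    have h2 : (2:ℝ) ≤ (2:ℝ)^q := by
      calc (2:ℝ) = 2^1 := (pow_one 2).symm
      _ ≤ 2^q := by apply pow_le_pow_right₀ one_le_two hq
    linarith
  · have hjn : j = (j.toNat : ℤ) := (Int.toNat_of_nonneg hj.le).symm
    rw [hjn, zpow_natCast] at h
    have : ((2^q : ℕ) : ℝ) = ((p ^ j.toNat : ℕ) : ℝ) := by push_cast; exact h
    exact two_pow_ne_ppow_nat hp hq (Nat.cast_injective this)

lemma exists_G {p : ℕ} (hp : Odd p) (hp1 : 1 < p) {C : ℝ} (hC1 : 1 < C) (hCp : C < p) :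
    ∃ (q : ℕ) (j : ℤ), 0 < q ∧ (p:ℝ)^j / 2^q ≠ 1 ∧
      C/p < (p:ℝ)^j / 2^q ∧ (p:ℝ)^j / 2^q < p/C := by
  have hp0 : (0:ℝ) < p := by positivity
  have hC0 : (0:ℝ) < C := lt_trans one_pos hC1
  have hδ : 1 < (p:ℝ)/C := (one_lt_div hC0).2 hCp
  set δ' : ℝ := min ((p:ℝ)/C) 2 with hδ'def
  have hδ'1 : 1 < δ' := lt_min hδ one_lt_two
  have hδ'0 : 0 < δ' := lt_trans one_pos hδ'1
  have hδ'le : δ' ≤ (p:ℝ)/C := min_le_left _ _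
  -- the reduced values r a ∈ [1, p)
  set r : ℕ → ℝ := fun a => 2^a / (p:ℝ)^(Int.log p ((2:ℝ)^a)) with hrdef
  have h2pos : ∀ a : ℕ, (0:ℝ) < 2^a := fun a => by positivity
  have hppos : ∀ z : ℤ, (0:ℝ) < (p:ℝ)^z := fun z => zpow_pos hp0 z
  have hr1 : ∀ a, 1 ≤ r a := by
    intro a
    rw [hrdef]
    exact (one_le_div (hppos _)).2 (Int.zpow_log_le_self hp1 (h2pos a))
  have hrp : ∀ a, r a < p := by
    intro a
    rw [hrdef]
    rw [div_lt_iff₀ (hppos _)]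
    have := Int.lt_zpow_succ_log_self hp1 ((2:ℝ)^a)
    rw [zpow_add_one₀ (ne_of_gt hp0)] at this
    linarith [this]
  have hrpos : ∀ a, 0 < r a := fun a => lt_of_lt_of_le one_pos (hr1 a)
  set Nc : ℕ := ⌈Real.logb δ' p⌉₊ + 1 with hNc
  have hmaps : ∀ a ∈ Finset.range (Nc+1), (⌊Real.logb δ' (r a)⌋₊) ∈ Finset.range Nc := by
    intro a _
    rw [Finset.mem_range, hNc]
    have h1 : Real.logb δ' (r a) < Real.logb δ' p := Real.logb_lt_logb hδ'1 (hrpos a) (hrp a)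
    have h2 : Real.logb δ' p ≤ (⌈Real.logb δ' p⌉₊ : ℝ) := Nat.le_ceil _
    have : Real.logb δ' (r a) < (⌈Real.logb δ' p⌉₊ : ℝ) + 1 := by linarith
    have hnn : 0 ≤ Real.logb δ' (r a) := Real.logb_nonneg hδ'1 (hr1 a)
    have := (Nat.floor_lt hnn (n := ⌈Real.logb δ' p⌉₊ + 1)).2 (by push_cast; linarith)
    omega
  obtain ⟨a, ha, b, hb, hab, heq⟩ :=
    Finset.exists_ne_map_eq_of_card_lt_of_maps_to
      (by simp : (Finset.range Nc).card < (Finset.range (Nc+1)).card) hmaps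
  -- wlog a < b
  wlog hlt : a < b generalizing a b
  · exact this b hb a ha hab.symm heq.symm (by omega)
  -- difference of logbs is in (-1, 1)
  have hbnd : ∀ c : ℕ, (⌊Real.logb δ' (r c)⌋₊ : ℝ) ≤ Real.logb δ' (r c) ∧
      Real.logb δ' (r c) < (⌊Real.logb δ' (r c)⌋₊ : ℝ) + 1 := by
    intro c
    exact ⟨Nat.floor_le (Real.logb_nonneg hδ'1 (hr1 c)), Nat.lt_floor_add_one _⟩
  have hdiff : -1 < Real.logb δ' (r a) - Real.logb δ' (r b) ∧
      Real.logb δ' (r a) - Real.logb δ' (r b) < 1 := by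
    obtain ⟨la, ua⟩ := hbnd a
    obtain ⟨lb, ub⟩ := hbnd b
    rw [heq] at la ua
    constructor <;> linarith
  set G : ℝ := r a / r b with hGdef
  have hGpos : 0 < G := div_pos (hrpos a) (hrpos b)
  have hlogG : Real.logb δ' G = Real.logb δ' (r a) - Real.logb δ' (r b) := by
    rw [hGdef, Real.logb_div (ne_of_gt (hrpos a)) (ne_of_gt (hrpos b))]
  have hGlt : G < δ' := by
    have h1 : Real.logb δ' G < 1 := by rw [hlogG]; exact hdiff.2
    have := Real.rpow_logb hδ'0 (ne_of_gt hδ'1) hGpos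
    calc G = δ' ^ Real.logb δ' G := this.symm
    _ < δ' ^ (1:ℝ) := Real.rpow_lt_rpow_left_iff hδ'1 |>.2 h1
    _ = δ' := Real.rpow_one _
  have hGgt : δ'⁻¹ < G := by
    have h1 : -1 < Real.logb δ' G := by rw [hlogG]; exact hdiff.1
    have := Real.rpow_logb hδ'0 (ne_of_gt hδ'1) hGpos
    calc δ'⁻¹ = δ' ^ (-1:ℝ) := by rw [Real.rpow_neg_one]
    _ < δ' ^ Real.logb δ' G := Real.rpow_lt_rpow_left_iff hδ'1 |>.2 h1
    _ = G := this
  -- express G in the required form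
  set La := Int.log p ((2:ℝ)^a) with hLa
  set Lb := Int.log p ((2:ℝ)^b) with hLb
  have hGform : G = (p:ℝ)^(Lb - La) / 2^(b-a) := by
    rw [hGdef, hrdef]
    have h2a : ((2:ℝ)^a) ≠ 0 := ne_of_gt (h2pos a)
    have h2b : ((2:ℝ)^b) ≠ 0 := ne_of_gt (h2pos b)
    have hpa : ((p:ℝ)^La) ≠ 0 := ne_of_gt (hppos _)
    have hpb : ((p:ℝ)^Lb) ≠ 0 := ne_of_gt (hppos _)
    have h2sub : (2:ℝ)^(b-a) * 2^a = 2^b := by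
      rw [← pow_add]; congr 1; omega
    show (2:ℝ)^a / (p:ℝ)^La / ((2:ℝ)^b / (p:ℝ)^Lb) = _
    rw [zpow_sub₀ (ne_of_gt hp0), ← h2sub]
    field_simp
  refine ⟨b - a, Lb - La, by omega, ?_, ?_, ?_⟩
  · intro h1
    have h2 : (2:ℝ)^(b-a) = (p:ℝ)^(Lb-La) :=
      ((div_eq_one_iff_eq (by positivity)).1 h1).symm
    exact two_pow_ne_ppow_real hp hp1 (by omega : 0 < b - a) h2
  · rw [← hGform]
    have h9 : ((p:ℝ)/C)⁻¹ ≤ δ'⁻¹ := inv_anti₀ hδ'0 hδ'le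
    rw [inv_div] at h9
    linarith [hGgt]
  · rw [← hGform]; linarith [hGlt, hδ'le]

lemma intlog_eq {p : ℕ} (hp1 : 1 < p) {t : ℝ} (ht : 0 < t) {L : ℤ}
    (h1 : (p:ℝ)^L ≤ t) (h2 : t < (p:ℝ)^(L+1)) : Int.log p t = L := by
  have hle : L ≤ Int.log p t := (Int.zpow_le_iff_le_log hp1 ht).1 h1
  have hlt : Int.log p t < L + 1 := (Int.lt_zpow_iff_log_lt hp1 ht).1 h2
  omega

lemma sweep {p : ℕ} (hp : Odd p) (hp1 : 1 < p) {C : ℝ} (hC1 : 1 < C) (hCp : C < p) :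
    ∃ K0 : ℕ, 0 < K0 ∧ ∀ t : ℝ, 0 < t → ∃ x, x < K0 ∧ ∀ y : ℤ,
      ¬(t ≤ 2^x * (p:ℝ)^y ∧ 2^x * (p:ℝ)^y < C * t) := by
  obtain ⟨q, j, hq, hGne, hGlo, hGhi⟩ := exists_G hp hp1 hC1 hCp
  have hp0 : (0:ℝ) < p := by positivity
  have hpR1 : (1:ℝ) < p := by exact_mod_cast hp1
  have hC0 : (0:ℝ) < C := lt_trans one_pos hC1
  set G : ℝ := (p:ℝ)^j / 2^q with hGdef
  have hGpos : 0 < G := by positivity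
  have hpz : ∀ z : ℤ, (0:ℝ) < (p:ℝ)^z := fun z => zpow_pos hp0 z
  -- main engine, shared by both branches
  have main : ∀ T : ℕ, ∀ t : ℝ, 0 < t →
      (∀ x, x < q*(T+2) → ∃ y : ℤ, t ≤ 2^x * (p:ℝ)^y ∧ 2^x * (p:ℝ)^y < C * t) →
      ∃ (L : ℕ → ℤ) (v : ℕ → ℝ),
        (∀ k, t * G^k = v k * (p:ℝ)^(L k)) ∧
        (∀ k, 1 ≤ v k) ∧ (∀ k, v k < p) ∧
        (∀ k, k ≤ T+1 → (v k = 1 ∨ (p:ℝ)/C < v k)) ∧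
        (∀ k, Int.log p (t * G^k) = L k) := by
    intro T t ht hcon
    have htk : ∀ k : ℕ, 0 < t * G^k := fun k => by positivity
    refine ⟨fun k => Int.log p (t * G^k), fun k => (t * G^k) / (p:ℝ)^(Int.log p (t * G^k)),
      ?_, ?_, ?_, ?_, fun k => rfl⟩
    · intro k; field_simp
    · intro k
      exact (one_le_div (hpz _)).2 (Int.zpow_log_le_self hp1 (htk k))
    · intro k
      rw [div_lt_iff₀ (hpz _)]
      have h := Int.lt_zpow_succ_log_self hp1 (t * G^k)
      rw [zpow_add_one₀ (ne_of_gt hp0)] at h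
      linarith [h]
    · intro k hk
      -- the p-power hitting hypothesis transported to t * G^k
      have hGk : G^k = (p:ℝ)^(j*(k:ℤ)) / 2^(q*k) := by
        rw [hGdef, div_pow, ← pow_mul, zpow_mul, zpow_natCast]
      have hxlt : q*k < q*(T+2) := by
        have h2 : q*(k+1) ≤ q*(T+2) := Nat.mul_le_mul_left q (by omega)
        have h3 : q*(k+1) = q*k + q := by ring
        omega
      obtain ⟨y, hy1, hy2⟩ := hcon (q*k) hxlt
      have h2q : (0:ℝ) < 2^(q*k) := by positivity
      have hpjk : (0:ℝ) < (p:ℝ)^(j*(k:ℤ)) := hpz _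
      have hz : ∃ z : ℤ, t * G^k ≤ (p:ℝ)^z ∧ (p:ℝ)^z < C * (t * G^k) := by
        refine ⟨y + j*k, ?_, ?_⟩
        · rw [hGk, zpow_add₀ (ne_of_gt hp0)]
          have h8 : t/2^(q*k) ≤ (p:ℝ)^y := by
            rw [div_le_iff₀ h2q, mul_comm]; exact hy1
          calc t * ((p:ℝ)^(j*(k:ℤ)) / 2^(q*k)) = (t / 2^(q*k)) * (p:ℝ)^(j*(k:ℤ)) := by ring
          _ ≤ (p:ℝ)^y * (p:ℝ)^(j*(k:ℤ)) := mul_le_mul_of_nonneg_right h8 hpjk.le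
        · rw [hGk, zpow_add₀ (ne_of_gt hp0)]
          have h8 : (p:ℝ)^y < C * t / 2^(q*k) := by
            rw [lt_div_iff₀ h2q, mul_comm]; exact hy2
          calc (p:ℝ)^y * (p:ℝ)^(j*(k:ℤ)) < (C * t / 2^(q*k)) * (p:ℝ)^(j*(k:ℤ)) :=
                mul_lt_mul_of_pos_right h8 hpjk
          _ = C * (t * ((p:ℝ)^(j*(k:ℤ)) / 2^(q*k))) := by ring
      obtain ⟨z, hz1, hz2⟩ := hz
      show t * G^k / (p:ℝ)^(Int.log p (t * G^k)) = 1 ∨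
        (p:ℝ)/C < t * G^k / (p:ℝ)^(Int.log p (t * G^k))
      rcases le_or_gt z (Int.log p (t * G^k)) with h | h
      · left
        have h1 : (p:ℝ)^z ≤ (p:ℝ)^(Int.log p (t * G^k)) := zpow_le_zpow_right₀ hpR1.le h
        have h2 : (p:ℝ)^(Int.log p (t * G^k)) ≤ t * G^k := Int.zpow_log_le_self hp1 (htk k)
        have h3 : t * G^k = (p:ℝ)^(Int.log p (t * G^k)) := le_antisymm (le_trans hz1 h1) h2
        rw [h3, Int.log_zpow hp1]
        exact div_self (ne_of_gt (hpz _))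
      · right
        have h1 : (p:ℝ)^(Int.log p (t * G^k) + 1) ≤ (p:ℝ)^z := zpow_le_zpow_right₀ hpR1.le h
        have h2 : (p:ℝ)^(Int.log p (t * G^k)) * p < C * (t * G^k) := by
          rw [← zpow_add_one₀ (ne_of_gt hp0)]
          exact lt_of_le_of_lt h1 hz2
        rw [lt_div_iff₀ (hpz _), div_mul_eq_mul_div, div_lt_iff₀ hC0]
        calc (p:ℝ) * (p:ℝ)^(Int.log p (t * G^k))
            = (p:ℝ)^(Int.log p (t * G^k)) * p := by ring
        _ < C * (t * G^k) := h2
        _ = t * G^k * C := by ring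
  rcases lt_or_gt_of_ne hGne with hGlt1 | hGgt1
  -- Case G < 1 (descending)
  · have hGinv : 1 < G⁻¹ := (one_lt_inv₀ hGpos).2 hGlt1
    obtain ⟨T, hT⟩ := pow_unbounded_of_one_lt ((p:ℝ)^2) hGinv
    have hGT' : G^T * (p:ℝ)^2 < 1 := by
      rw [inv_pow] at hT
      have h1 := mul_lt_mul_of_pos_left hT (pow_pos hGpos T)
      rw [mul_inv_cancel₀ (ne_of_gt (pow_pos hGpos T))] at h1
      exact h1
    refine ⟨q*(T+2), by positivity, ?_⟩
    intro t ht
    by_contra hcontra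
    push_neg at hcontra
    obtain ⟨L, v, htkv, hv1, hvp, dichot, hLlog⟩ := main T t ht hcontra
    have htkpos : ∀ k : ℕ, (0:ℝ) < t * G^k := fun k => by positivity
    have hone : ((p:ℝ)/C) * (C/p) = 1 := by field_simp
    have stepA : ∀ k, k+1 ≤ T+1 → (p:ℝ)/C < v k →
        L (k+1) = L k ∧ v (k+1) = v k * G ∧ (p:ℝ)/C < v (k+1) := by
      intro k hk hvk
      have e1 : t * G^(k+1) = (v k * (p:ℝ)^(L k)) * G := by
        rw [pow_succ, ← mul_assoc, htkv k]
      have hvG : 1 < v k * G := by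
        have hpC0 : 0 < (p:ℝ)/C := by positivity
        have s1 : ((p:ℝ)/C) * (C/p) < ((p:ℝ)/C) * G := (mul_lt_mul_iff_right₀ hpC0).2 hGlo
        have s2 : ((p:ℝ)/C) * G < v k * G := (mul_lt_mul_iff_left₀ hGpos).2 hvk
        linarith [hone]
      have hlow : (p:ℝ)^(L k) < t * G^(k+1) := by
        rw [e1]
        calc (p:ℝ)^(L k) = 1 * (p:ℝ)^(L k) := (one_mul _).symm
        _ < (v k * G) * (p:ℝ)^(L k) := mul_lt_mul_of_pos_right hvG (hpz _)
        _ = v k * (p:ℝ)^(L k) * G := by ring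
      have hup : t * G^(k+1) < (p:ℝ)^(L k + 1) := by
        rw [e1, zpow_add_one₀ (ne_of_gt hp0)]
        have s1 : v k * G < p * G := mul_lt_mul_of_pos_right (hvp k) hGpos
        have s2 : (p:ℝ) * G < p * 1 := (mul_lt_mul_iff_right₀ hp0).2 hGlt1
        calc v k * (p:ℝ)^(L k) * G = (v k * G) * (p:ℝ)^(L k) := by ring
        _ < ((p:ℝ) * 1) * (p:ℝ)^(L k) := mul_lt_mul_of_pos_right (by linarith) (hpz _)
        _ = (p:ℝ)^(L k) * p := by ring
      have hL : L (k+1) = L k := by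
        rw [← hLlog (k+1)]
        exact intlog_eq hp1 (htkpos (k+1)) hlow.le hup
      have hv : v (k+1) = v k * G := by
        have h10 := htkv (k+1)
        rw [hL, e1] at h10
        have h11 : (v k * G) * (p:ℝ)^(L k) = v (k+1) * (p:ℝ)^(L k) := by
          rw [← h10]; ring
        exact (mul_right_cancel₀ (ne_of_gt (hpz (L k))) h11).symm
      refine ⟨hL, hv, ?_⟩
      have h1 : (1:ℝ) < v (k+1) := by rw [hv]; exact hvG
      rcases dichot (k+1) hk with h | h
      · exfalso; rw [h] at h1; exact lt_irrefl 1 h1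
      · exact h
    have hstart : ∃ k0, k0 ≤ 1 ∧ (p:ℝ)/C < v k0 := by
      rcases dichot 0 (by omega) with h1 | h1
      · have e0 : t * G^0 = (p:ℝ)^(L 0) := by
          have h2 := htkv 0
          rw [h1, one_mul] at h2; exact h2
        have e1 : t * G^1 = (p:ℝ)^(L 0) * G := by
          rw [← e0]; ring
        have h3 : (p:ℝ)^(L 0) = (p:ℝ)^(L 0 - 1) * p := by
          rw [← zpow_add_one₀ (ne_of_gt hp0)]; congr 1; omega
        have s1 : (C:ℝ) < p * G := by
          have s2 := (mul_lt_mul_iff_right₀ hp0).2 hGlo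
          have e : (p:ℝ) * (C/p) = C := by field_simp
          linarith [s2, e.symm.le]
        have hlow : (p:ℝ)^(L 0 - 1) < t * G^1 := by
          rw [e1, h3]
          have s3 := mul_lt_mul_of_pos_right hC1 (hpz (L 0 - 1))
          calc (p:ℝ)^(L 0 - 1) < C * (p:ℝ)^(L 0 - 1) := by linarith [s3]
          _ ≤ (p * G) * (p:ℝ)^(L 0 - 1) := mul_le_mul_of_nonneg_right s1.le (hpz _).le
          _ = (p:ℝ)^(L 0 - 1) * p * G := by ring
        have hup : t * G^1 < (p:ℝ)^((L 0 - 1) + 1) := by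
          have h4 : (L 0 - 1) + 1 = L 0 := by omega
          rw [h4, e1]
          exact mul_lt_of_lt_one_right (hpz _) hGlt1
        have hL1 : L 1 = L 0 - 1 := by
          rw [← hLlog 1]
          exact intlog_eq hp1 (htkpos 1) hlow.le hup
        have hv1eq : v 1 = G * p := by
          have h10 := htkv 1
          rw [hL1, e1, h3] at h10
          have h11 : (G * p) * (p:ℝ)^(L 0 - 1) = v 1 * (p:ℝ)^(L 0 - 1) := by
            rw [← h10]; ring
          exact (mul_right_cancel₀ (ne_of_gt (hpz (L 0 - 1))) h11).symm
        have hv1gt : 1 < v 1 := by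
          rw [hv1eq]
          have s2 := (mul_lt_mul_iff_left₀ hp0).2 hGlo
          have e : (C/(p:ℝ)) * p = C := by field_simp
          calc (1:ℝ) < C := hC1
          _ = (C/(p:ℝ)) * p := e.symm
          _ < G * p := s2
        rcases dichot 1 (by omega) with h | h
        · exfalso; rw [h] at hv1gt; exact lt_irrefl 1 hv1gt
        · exact ⟨1, le_refl 1, h⟩
      · exact ⟨0, by omega, h1⟩
    obtain ⟨k0, hk0le, hk0⟩ := hstart
    have ind : ∀ d, k0 + d ≤ T+1 → (p:ℝ)/C < v (k0+d) ∧ v (k0+d) = v k0 * G^d := by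
      intro d
      induction d with
      | zero => intro _; exact ⟨hk0, by simp⟩
      | succ n ih =>
        intro hd
        obtain ⟨ih1, ih2⟩ := ih (by omega)
        have hs := stepA (k0+n) (by omega) ih1
        have e : k0 + (n+1) = (k0+n) + 1 := by omega
        rw [e]
        refine ⟨hs.2.2, ?_⟩
        rw [hs.2.1, ih2, pow_succ]; ring
    obtain ⟨hfin1, hfin2⟩ := ind T (by omega)
    rw [hfin2] at hfin1
    have h2 : v k0 * G^T ≤ (p:ℝ) * G^T :=
      mul_le_mul_of_nonneg_right (hvp k0).le (pow_nonneg hGpos.le T)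
    have h1 : (p:ℝ)/C < p * G^T := lt_of_lt_of_le hfin1 h2
    have h3 : (p:ℝ) * G^T * p < 1 := by
      calc (p:ℝ) * G^T * p = G^T * (p:ℝ)^2 := by ring
      _ < 1 := hGT'
    have h4 : ((p:ℝ)/C) * p < 1 := by
      have := mul_lt_mul_of_pos_right h1 hp0
      linarith
    have h5 : (1:ℝ) < ((p:ℝ)/C) * p := by
      rw [div_mul_eq_mul_div, lt_div_iff₀ hC0]
      nlinarith [hpR1, hCp]
    linarith
  -- Case 1 < G (ascending)
  · obtain ⟨T, hT⟩ := pow_unbounded_of_one_lt ((p:ℝ)^2) hGgt1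
    refine ⟨q*(T+2), by positivity, ?_⟩
    intro t ht
    by_contra hcontra
    push_neg at hcontra
    obtain ⟨L, v, htkv, hv1, hvp, dichot, hLlog⟩ := main T t ht hcontra
    have htkpos : ∀ k : ℕ, (0:ℝ) < t * G^k := fun k => by positivity
    have hGltp : G < p := by
      have h6 : (p:ℝ)/C < p := by
        rw [div_lt_iff₀ hC0]; nlinarith [hp0, hC1]
      linarith [hGhi]
    have keyne : ∀ k, k ≤ T → v k ≠ 1 := by
      intro k hk h1
      have e0 : t * G^k = (p:ℝ)^(L k) := by
        have h2 := htkv k; rw [h1, one_mul] at h2; exact h2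
      have e1 : t * G^(k+1) = (p:ℝ)^(L k) * G := by
        rw [pow_succ, ← mul_assoc, e0]
      have hlow : (p:ℝ)^(L k) ≤ t * G^(k+1) := by
        rw [e1]
        exact le_mul_of_one_le_right (hpz _).le hGgt1.le
      have hup : t * G^(k+1) < (p:ℝ)^(L k + 1) := by
        rw [e1, zpow_add_one₀ (ne_of_gt hp0)]
        exact (mul_lt_mul_iff_right₀ (hpz _)).2 hGltp
      have hL : L (k+1) = L k := by
        rw [← hLlog (k+1)]
        exact intlog_eq hp1 (htkpos (k+1)) hlow hup
      have hveq : v (k+1) = G := by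
        have h10 := htkv (k+1)
        rw [hL, e1] at h10
        have h11 : G * (p:ℝ)^(L k) = v (k+1) * (p:ℝ)^(L k) := by
          rw [← h10]; ring
        exact (mul_right_cancel₀ (ne_of_gt (hpz (L k))) h11).symm
      rcases dichot (k+1) (by omega) with h | h
      · rw [hveq] at h; exact hGne h
      · rw [hveq] at h; linarith [hGhi]
    have keyg : ∀ k, k ≤ T → (p:ℝ)/C < v k := by
      intro k hk
      rcases dichot k (by omega) with h | h
      · exact absurd h (keyne k hk)
      · exact h
    have step : ∀ k, k+1 ≤ T → L (k+1) = L k ∧ v (k+1) = v k * G := by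
      intro k hk
      have e1 : t * G^(k+1) = (v k * (p:ℝ)^(L k)) * G := by
        rw [pow_succ, ← mul_assoc, htkv k]
      have hvG1 : 1 ≤ v k * G := by nlinarith [hv1 k, hGgt1]
      have hlow : (p:ℝ)^(L k) ≤ t * G^(k+1) := by
        rw [e1]
        calc (p:ℝ)^(L k) = 1 * (p:ℝ)^(L k) := (one_mul _).symm
        _ ≤ (v k * G) * (p:ℝ)^(L k) := mul_le_mul_of_nonneg_right hvG1 (hpz _).le
        _ = v k * (p:ℝ)^(L k) * G := by ring
      by_cases hw : t * G^(k+1) < (p:ℝ)^(L k + 1)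
      · have hL : L (k+1) = L k := by
          rw [← hLlog (k+1)]
          exact intlog_eq hp1 (htkpos (k+1)) hlow hw
        have hveq : v (k+1) = v k * G := by
          have h10 := htkv (k+1)
          rw [hL, e1] at h10
          have h11 : (v k * G) * (p:ℝ)^(L k) = v (k+1) * (p:ℝ)^(L k) := by
            rw [← h10]; ring
          exact (mul_right_cancel₀ (ne_of_gt (hpz (L k))) h11).symm
        exact ⟨hL, hveq⟩
      · exfalso
        push_neg at hw
        have s1 : v k * G < p * G := mul_lt_mul_of_pos_right (hvp k) hGpos
        have s2 : (p:ℝ) * G < p * p := (mul_lt_mul_iff_right₀ hp0).2 hGltp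
        have hup2 : t * G^(k+1) < (p:ℝ)^((L k + 1) + 1) := by
          have h5 : (p:ℝ)^((L k + 1) + 1) = (p:ℝ)^(L k) * p * p := by
            rw [zpow_add_one₀ (ne_of_gt hp0), zpow_add_one₀ (ne_of_gt hp0)]
          rw [e1, h5]
          calc v k * (p:ℝ)^(L k) * G = (v k * G) * (p:ℝ)^(L k) := by ring
          _ < ((p:ℝ) * p) * (p:ℝ)^(L k) := mul_lt_mul_of_pos_right (s1.trans s2) (hpz _)
          _ = (p:ℝ)^(L k) * p * p := by ring
        have hL : L (k+1) = L k + 1 := by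
          rw [← hLlog (k+1)]
          exact intlog_eq hp1 (htkpos (k+1)) hw hup2
        have hveq : v (k+1) = v k * G / p := by
          have h10 := htkv (k+1)
          rw [hL, e1, zpow_add_one₀ (ne_of_gt hp0)] at h10
          have h11 : (v k * G / p) * ((p:ℝ)^(L k) * p) = v (k+1) * ((p:ℝ)^(L k) * p) := by
            rw [← h10]; field_simp
          exact (mul_right_cancel₀ (ne_of_gt (mul_pos (hpz (L k)) hp0)) h11).symm
        have hsmall : v (k+1) < (p:ℝ)/C := by
          rw [hveq]
          have s4 : v k * G / p < G := by
            rw [div_lt_iff₀ hp0]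
            calc v k * G = G * v k := by ring
            _ < G * p := (mul_lt_mul_iff_right₀ hGpos).2 (hvp k)
          linarith [hGhi]
        linarith [keyg (k+1) hk, hsmall]
    have geo : ∀ k, k ≤ T → v k = v 0 * G^k := by
      intro k
      induction k with
      | zero => intro _; simp
      | succ n ih =>
        intro hk
        rw [(step n (by omega)).2, ih (by omega), pow_succ]; ring
    have hfin := geo T (le_refl T)
    have h1 : (p:ℝ)^2 < v T := by
      rw [hfin]
      have h7 : G^T ≤ v 0 * G^T := le_mul_of_one_le_left (pow_nonneg hGpos.le T) (hv1 0)
      linarith [hT]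
    have h2 : v T < p := hvp T
    nlinarith [hpR1]

theorem Ap_lower_bound (p : ℕ) (hp : Odd p) (hp1 : 1 < p)
    (C : ℝ) (hC1 : 1 < C) (hCp : C < p) :
    ∃ n : ℕ, 0 < n ∧
      ¬ ∃ B : Finset ℕ, ∃ hB : B.Nonempty,
          (∀ b ∈ B, ∃ x y : ℕ, b = 2 ^ x * p ^ y) ∧
          (∑ b ∈ B, b) = n ∧
          (∀ b ∈ B, (b : ℝ) < C * (B.min' hB : ℝ)) := by
  classical
  by_contra hcon
  push_neg at hcon
  obtain ⟨K0, hK0, hsweep⟩ := sweep hp hp1 hC1 hCp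
  have hp0 : 0 < p := by omega
  have hp2dvd : ¬ (2 ∣ p) := by
    intro h
    exact (Nat.not_even_iff_odd.2 hp) ((even_iff_two_dvd).2 h)
  have hfact : ∀ x y : ℕ, (2^x * p^y).factorization 2 = x := by
    intro x y
    have h2 : (2:ℕ)^x ≠ 0 := pow_ne_zero _ two_ne_zero
    have hpy : p^y ≠ 0 := pow_ne_zero _ (by omega)
    rw [Nat.factorization_mul h2 hpy, Nat.factorization_pow, Nat.factorization_pow]
    have h1 : (2:ℕ).factorization 2 = 1 := by
      rw [Nat.Prime.factorization Nat.prime_two]; simp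
    have h0 : p.factorization 2 = 0 := Nat.factorization_eq_zero_of_not_dvd hp2dvd
    simp [h1, h0]
  have hnotlt : ∀ (m x y y' : ℕ), 0 < m → m ≤ 2^x*p^y →
      ((2^x*p^y' : ℕ):ℝ) < C * (m:ℝ) → ¬ (y < y') := by
    intro m x y y' hm hmb hb' hyy
    have h3 : p * m ≤ 2^x*p^y' := by
      calc p * m ≤ p * (2^x*p^y) := Nat.mul_le_mul_left _ hmb
      _ = 2^x*p^(y+1) := by ring
      _ ≤ 2^x*p^y' := Nat.mul_le_mul_left _ (Nat.pow_le_pow_right (by omega) (by omega))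
    have h4 : ((p:ℝ)) * m ≤ ((2^x*p^y' : ℕ):ℝ) := by exact_mod_cast h3
    have h5 : C * (m:ℝ) < (p:ℝ) * m := by
      apply mul_lt_mul_of_pos_right hCp
      exact_mod_cast hm
    linarith
  -- parameters
  set J := 32*K0 with hJ
  set K := 32*K0*K0 with hKdef
  have hKJ : K = K0 * J := by rw [hJ, hKdef]; ring
  have hJ1 : 1 ≤ J := by omega
  have hK1 : 1 ≤ K := by nlinarith [hK0]
  have hJK : J ≤ K := by
    calc J = 32*K0*1 := by rw [hJ]; ring
    _ ≤ 32*K0*K0 := Nat.mul_le_mul_left _ hK0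
  have hKK : K*K < 2^(J-1) := by
    have h1 : K0 < 2^K0 := Nat.lt_two_pow_self
    have h2 : K0^4 < (2^K0)^4 := Nat.pow_lt_pow_left h1 (by norm_num)
    have h4 : (1024:ℕ)*(2^K0)^4 = 2^(10+4*K0) := by
      rw [pow_add, ← pow_mul, Nat.mul_comm K0 4]
      norm_num
    calc K*K = 1024*K0^4 := by rw [hKdef]; ring
    _ < 1024*(2^K0)^4 := mul_lt_mul_of_pos_left h2 (by norm_num)
    _ = 2^(10+4*K0) := h4
    _ ≤ 2^(J-1) := Nat.pow_le_pow_right (by norm_num) (by omega)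
  -- Gap predicate
  let Gap : ℕ → ℕ → Prop := fun m x => ∀ y : ℤ,
      ¬((m:ℝ) ≤ 2^x * (p:ℝ)^y ∧ 2^x * (p:ℝ)^y < C * m)
  have gapcount : ∀ m : ℕ, 0 < m → J ≤ ((Finset.range K).filter (fun x => Gap m x)).card := by
    intro m hm
    have hm0 : (0:ℝ) < (m:ℝ) := by exact_mod_cast hm
    choose xf hxf hgapf using fun i : ℕ => hsweep ((m:ℝ)/2^(K0*i)) (by positivity)
    have hmaps : ∀ i ∈ Finset.range J, K0*i + xf i ∈
        (Finset.range K).filter (fun x => Gap m x) := by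
      intro i hi
      rw [Finset.mem_range] at hi
      rw [Finset.mem_filter, Finset.mem_range]
      refine ⟨?_, ?_⟩
      · have h6 : K0*i + xf i < K0*(i+1) := by have := hxf i; nlinarith
        calc K0*i + xf i < K0*(i+1) := h6
        _ ≤ K0*J := Nat.mul_le_mul_left _ (by omega)
        _ = K := hKJ.symm
      · intro y hy
        obtain ⟨hy1, hy2⟩ := hy
        have h2A : (0:ℝ) < 2^(K0*i) := by positivity
        apply hgapf i y
        have e : (2:ℝ)^(K0*i + xf i) * (p:ℝ)^y = (2^(xf i) * (p:ℝ)^y) * 2^(K0*i) := by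
          rw [pow_add]; ring
        constructor
        · rw [div_le_iff₀ h2A, ← e]; exact hy1
        · rw [← mul_div_assoc, lt_div_iff₀ h2A, ← e]; exact hy2
    have hinj : Set.InjOn (fun i => K0*i + xf i) ↑(Finset.range J) := by
      intro a _ b _ hab
      simp only at hab
      have ha' := hxf a
      have hb' := hxf b
      rcases Nat.lt_trichotomy a b with h|h|h
      · exfalso
        have h7 : K0*(a+1) ≤ K0*b := Nat.mul_le_mul_left _ (by omega)
        have e7 : K0*(a+1) = K0*a + K0 := by ring
        omega
      · exact h
      · exfalso
        have h7 : K0*(b+1) ≤ K0*a := Nat.mul_le_mul_left _ (by omega)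
        have e7 : K0*(b+1) = K0*b + K0 := by ring
        omega
    calc J = (Finset.range J).card := (Finset.card_range J).symm
    _ ≤ _ := Finset.card_le_card_of_injOn _ hmaps hinj
  -- candidate minima set
  set M : Finset ℕ :=
    ((Finset.range K) ×ˢ (Finset.range K)).image (fun xy => 2^xy.1 * p^xy.2) with hM
  have hMcard : M.card ≤ K*K := by
    calc M.card ≤ ((Finset.range K) ×ˢ (Finset.range K)).card := Finset.card_image_le
    _ = K*K := by rw [Finset.card_product, Finset.card_range]
  have hMpos : ∀ m ∈ M, 0 < m := by
    intro m hmm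
    rw [hM, Finset.mem_image] at hmm
    obtain ⟨xy, _, hxy⟩ := hmm
    rw [← hxy]
    positivity
  -- nonGaps and target finset
  let nonGaps : ℕ → Finset ℕ := fun m => (Finset.range K).filter (fun x => ¬ Gap m x)
  have hnonGaps : ∀ m : ℕ, 0 < m → (nonGaps m).card ≤ K - J := by
    intro m hm
    have h1 : nonGaps m = Finset.range K \ (Finset.range K).filter (fun x => Gap m x) := by
      simp only [nonGaps]
      rw [Finset.filter_not]
    have h2 : (nonGaps m).card =
        K - ((Finset.range K).filter (fun x => Gap m x)).card := by
      rw [h1, Finset.card_sdiff_of_subset (Finset.filter_subset _ _), Finset.card_range]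
    rw [h2]
    have := gapcount m hm
    omega
  set Tgt : Finset (ℕ × Finset ℕ) :=
    M.biUnion (fun m => ({m} : Finset ℕ) ×ˢ (nonGaps m).powerset) with hTgt
  have hTgtcard : Tgt.card < 2^(K-1) := by
    have h1 : Tgt.card ≤ ∑ m ∈ M, (({m} : Finset ℕ) ×ˢ (nonGaps m).powerset).card :=
      Finset.card_biUnion_le
    have h2 : ∀ m ∈ M, (({m} : Finset ℕ) ×ˢ (nonGaps m).powerset).card ≤ 2^(K-J) := by
      intro m hmm
      rw [Finset.card_product, Finset.card_singleton, one_mul, Finset.card_powerset]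
      exact Nat.pow_le_pow_right (by norm_num) (hnonGaps m (hMpos m hmm))
    have h3 : Tgt.card ≤ M.card * 2^(K-J) := by
      calc Tgt.card ≤ ∑ m ∈ M, (({m} : Finset ℕ) ×ˢ (nonGaps m).powerset).card := h1
      _ ≤ ∑ _m ∈ M, 2^(K-J) := Finset.sum_le_sum h2
      _ = M.card * 2^(K-J) := by rw [Finset.sum_const, smul_eq_mul]
    have h4 : M.card * 2^(K-J) < 2^(J-1) * 2^(K-J) := by
      apply mul_lt_mul_of_pos_right (lt_of_le_of_lt hMcard hKK)
      positivity
    have h5 : (2:ℕ)^(J-1) * 2^(K-J) = 2^(K-1) := by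
      rw [← pow_add]
      congr 1
      omega
    omega
  -- choose representations for each n in the dyadic block
  have hIpos : ∀ n ∈ Finset.Ico (2^(K-1)) (2^K), 0 < n := by
    intro n hn
    rw [Finset.mem_Ico] at hn
    have : 0 < 2^(K-1) := Nat.pow_pos (by norm_num)
    omega
  have hrep : ∀ n : ℕ, ∃ (B : Finset ℕ) (m : ℕ), n ∈ Finset.Ico (2^(K-1)) (2^K) →
      (m ∈ B ∧ (∀ b ∈ B, m ≤ b) ∧ (∀ b ∈ B, ∃ x y : ℕ, b = 2^x*p^y) ∧
       (∑ b ∈ B, b) = n ∧ (∀ b ∈ B, (b:ℝ) < C * m)) := by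
    intro n
    by_cases hn : n ∈ Finset.Ico (2^(K-1)) (2^K)
    · obtain ⟨B, hB, hA, hsum, hlt⟩ := hcon n (hIpos n hn)
      exact ⟨B, B.min' hB, fun _ => ⟨Finset.min'_mem _ _,
        fun b hb => Finset.min'_le _ _ hb, hA, hsum, hlt⟩⟩
    · exact ⟨∅, 0, fun h => absurd h hn⟩
  choose Bf mf hrepf using hrep
  -- facts about elements of Bf n
  have helt : ∀ n ∈ Finset.Ico (2^(K-1)) (2^K), ∀ b ∈ Bf n, b ≤ n := by
    intro n hn b hb
    have h := hrepf n hn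
    calc b ≤ ∑ b' ∈ Bf n, b' := Finset.single_le_sum (fun i _ => Nat.zero_le i) hb
    _ = n := h.2.2.2.1
  have hxyK : ∀ b : ℕ, b < 2^K → ∀ x y : ℕ, b = 2^x*p^y → x < K ∧ y < K := by
    intro b hbK x y hxy
    constructor
    · have h1 : (2:ℕ)^x ≤ b := by
        rw [hxy]
        exact Nat.le_mul_of_pos_right _ (by positivity)
      have : (2:ℕ)^x < 2^K := lt_of_le_of_lt h1 hbK
      exact (Nat.pow_lt_pow_iff_right (by norm_num)).1 this
    · have h1 : (p:ℕ)^y ≤ b := by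
        rw [hxy]
        exact Nat.le_mul_of_pos_left _ (by positivity)
      have h2 : (p:ℕ)^y < 2^K := lt_of_le_of_lt h1 hbK
      have h3 : (2:ℕ)^K ≤ p^K := Nat.pow_le_pow_left (by omega) K
      exact (Nat.pow_lt_pow_iff_right hp1).1 (lt_of_lt_of_le h2 h3)
  -- encoding map
  set enc : ℕ → ℕ × Finset ℕ :=
    fun n => (mf n, (Bf n).image (fun b => b.factorization 2)) with henc
  -- mapsTo
  have hmapsTo : ∀ n ∈ Finset.Ico (2^(K-1)) (2^K), enc n ∈ Tgt := by
    intro n hn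
    obtain ⟨hmB, hmin, hA, hsum, hltC⟩ := hrepf n hn
    have hnK : n < 2^K := (Finset.mem_Ico.1 hn).2
    have hmpos : 0 < mf n := by
      obtain ⟨x, y, hxy⟩ := hA _ hmB
      rw [hxy]; positivity
    rw [hTgt, Finset.mem_biUnion]
    refine ⟨mf n, ?_, ?_⟩
    · -- mf n ∈ M
      obtain ⟨x, y, hxy⟩ := hA _ hmB
      have hmn : mf n ≤ n := helt n hn _ hmB
      have hxyK' := hxyK (mf n) (by omega) x y hxy
      rw [hM, Finset.mem_image]
      exact ⟨(x, y), by
        rw [Finset.mem_product, Finset.mem_range, Finset.mem_range]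
        exact ⟨hxyK'.1, hxyK'.2⟩, hxy.symm⟩
    · rw [Finset.mem_product, Finset.mem_singleton, Finset.mem_powerset]
      refine ⟨rfl, ?_⟩
      intro x hx
      rw [Finset.mem_image] at hx
      obtain ⟨b, hb, hbx⟩ := hx
      obtain ⟨xb, yb, hxy⟩ := hA b hb
      have hxeq : x = xb := by rw [← hbx, hxy, hfact]
      have hbn : b ≤ n := helt n hn b hb
      have hbK := hxyK b (by omega) xb yb hxy
      simp only [nonGaps, Finset.mem_filter, Finset.mem_range]
      refine ⟨by omega, ?_⟩
      intro hgap
      apply hgap (yb : ℤ)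
      have hc1 : ((mf n):ℝ) ≤ 2^xb * (p:ℝ)^(yb:ℤ) := by
        have := hmin b hb
        rw [hxy] at this
        have hcast : ((2^xb*p^yb : ℕ):ℝ) = 2^xb * (p:ℝ)^(yb:ℤ) := by
          push_cast
          rw [zpow_natCast]
        rw [← hcast]
        exact_mod_cast this
      have hc2 : 2^xb * (p:ℝ)^(yb:ℤ) < C * (mf n) := by
        have := hltC b hb
        rw [hxy] at this
        have hcast : ((2^xb*p^yb : ℕ):ℝ) = 2^xb * (p:ℝ)^(yb:ℤ) := by
          push_cast
          rw [zpow_natCast]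
        rw [← hcast]
        exact this
      rw [hxeq]
      exact ⟨hc1, hc2⟩
  -- injectivity
  have hsubset : ∀ n n', n ∈ Finset.Ico (2^(K-1)) (2^K) → n' ∈ Finset.Ico (2^(K-1)) (2^K) →
      enc n = enc n' → Bf n ⊆ Bf n' := by
    intro n n' hn hn' heq
    obtain ⟨hmB, hmin, hA, hsum, hltC⟩ := hrepf n hn
    obtain ⟨hmB', hmin', hA', hsum', hltC'⟩ := hrepf n' hn'
    have hmeq : mf n = mf n' := congrArg Prod.fst heq
    have himeq : (Bf n).image (fun b => b.factorization 2) =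
        (Bf n').image (fun b => b.factorization 2) := congrArg Prod.snd heq
    intro b hb
    obtain ⟨xb, yb, hxy⟩ := hA b hb
    have hbx : b.factorization 2 ∈ (Bf n').image (fun b => b.factorization 2) := by
      rw [← himeq]
      exact Finset.mem_image_of_mem _ hb
    rw [Finset.mem_image] at hbx
    obtain ⟨b', hb', hbeq⟩ := hbx
    obtain ⟨xb', yb', hxy'⟩ := hA' b' hb'
    have hxeq : xb = xb' := by
      have e1 : b.factorization 2 = xb := by rw [hxy, hfact]
      have e2 : b'.factorization 2 = xb' := by rw [hxy', hfact]
      rw [e1, e2] at hbeq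
      exact hbeq.symm
    have hmpos : 0 < mf n := by
      obtain ⟨x, y, hxy0⟩ := hA _ hmB
      rw [hxy0]; positivity
    -- show yb = yb'
    have hyb : yb = yb' := by
      have d1 : ¬ (yb < yb') := by
        apply hnotlt (mf n) xb yb yb' hmpos
        · rw [← hxy]; exact hmin b hb
        · rw [hxeq, ← hxy', hmeq]
          exact hltC' b' hb'
      have d2 : ¬ (yb' < yb) := by
        apply hnotlt (mf n) xb' yb' yb hmpos
        · rw [← hxy', hmeq]; exact hmin' b' hb'
        · rw [← hxeq, ← hxy]
          exact hltC b hb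
      omega
    have : b = b' := by rw [hxy, hxy', hxeq, hyb]
    rw [this]
    exact hb'
  have hinjOn : Set.InjOn enc ↑(Finset.Ico (2^(K-1)) (2^K)) := by
    intro n hn n' hn' heq
    have h1 := hsubset n n' hn hn' heq
    have h2 := hsubset n' n hn' hn heq.symm
    have hBeq : Bf n = Bf n' := Finset.Subset.antisymm h1 h2
    have e1 := (hrepf n hn).2.2.2.1
    have e2 := (hrepf n' hn').2.2.2.1
    rw [← e1, ← e2, hBeq]
  -- final contradiction
  have hIcard : (Finset.Ico (2^(K-1)) (2^K)).card = 2^(K-1) := by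
    rw [Nat.card_Ico]
    have : (2:ℕ)^K = 2*2^(K-1) := by
      rw [← pow_succ']
      congr 1
      omega
    omega
  have hle : (Finset.Ico (2^(K-1)) (2^K)).card ≤ Tgt.card :=
    Finset.card_le_card_of_injOn enc hmapsTo hinjOn
  rw [hIcard] at hle
  omega
end

section
/- For every odd integer p > 1 and every real C with 1 < C < p, the number of positive integers n ≤ N that can be written as a sum of distinct elements of A_p with all summands b satisfying b₁ ≤ b < C·b₁ (where b₁ is the smallest summand), is o(N) as N → ∞. -/
set_option maxHeartbeats 1000000
open Finset Filter Real
open scoped Classical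

/-- the single-point condition: fractional part of `z*α` is at least `ℓ`. -/
def fr (α ℓ : ℝ) (z : ℤ) : Prop := ℓ ≤ Int.fract ((z:ℝ) * α)

lemma fr_iff {α ℓ : ℝ} {z : ℤ} : fr α ℓ z ↔ ℓ ≤ Int.fract ((z:ℝ) * α) := Iff.rfl


lemma pow_mul_pow_inj {p : ℕ} (hodd : Odd p) (hp1 : 1 < p) {x y x' y' : ℕ}
    (h : 2 ^ x * p ^ y = 2 ^ x' * p ^ y') : x = x' ∧ y = y' := by
  have hcop : Nat.Coprime 2 p := hodd.coprime_two_left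
  have hxx : x = x' := by
    have h1 : 2 ^ x ∣ 2 ^ x' * p ^ y' := by rw [← h]; exact dvd_mul_right _ _
    have h1' : 2 ^ x' ∣ 2 ^ x * p ^ y := h ▸ dvd_mul_right _ _
    have c1 : Nat.Coprime (2 ^ x) (p ^ y') := hcop.pow _ _
    have c2 : Nat.Coprime (2 ^ x') (p ^ y) := hcop.pow _ _
    have d1 : 2 ^ x ∣ 2 ^ x' := (Nat.Coprime.dvd_of_dvd_mul_right c1) h1
    have d2 : 2 ^ x' ∣ 2 ^ x := (Nat.Coprime.dvd_of_dvd_mul_right c2) h1'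
    exact Nat.pow_right_injective le_rfl (Nat.dvd_antisymm d1 d2)
  subst hxx
  refine ⟨rfl, Nat.pow_right_injective hp1 ?_⟩
  have h2 : 0 < 2 ^ x := Nat.pow_pos (by norm_num)
  exact Nat.eq_of_mul_eq_mul_left h2 h

lemma y_window_unique {p m x y y' : ℕ} (hp1 : 1 < p) {C : ℝ} (hC1 : 1 < C) (hCp : C < p)
    (h1 : m ≤ 2 ^ x * p ^ y) (h2 : ((2 ^ x * p ^ y : ℕ) : ℝ) < C * m)
    (h1' : m ≤ 2 ^ x * p ^ y') (h2' : ((2 ^ x * p ^ y' : ℕ) : ℝ) < C * m) : y = y' := by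
  have key : ∀ a b : ℕ, m ≤ 2 ^ x * p ^ a → ((2 ^ x * p ^ b : ℕ) : ℝ) < C * m → b < a + 1 := by
    intro a b ha hb
    have hp0 : (0:ℝ) < p := by positivity
    have h3 : ((2 ^ x * p ^ b : ℕ) : ℝ) < C * (2 ^ x * p ^ a : ℕ) := by
      calc ((2 ^ x * p ^ b : ℕ) : ℝ) < C * m := hb
        _ ≤ C * (2 ^ x * p ^ a : ℕ) := by
            apply mul_le_mul_of_nonneg_left (by exact_mod_cast ha) (by linarith)
    have h4 : ((2:ℝ) ^ x * p ^ b) < p * (2 ^ x * p ^ a) := by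
      push_cast at h3
      calc ((2:ℝ) ^ x * p ^ b) < C * (2 ^ x * p ^ a) := h3
        _ ≤ p * (2 ^ x * p ^ a) := by
            apply mul_le_mul_of_nonneg_right hCp.le (by positivity)
    have h5 : (p:ℝ) ^ b < p ^ (a+1) := by
      have h2x : (0:ℝ) < 2 ^ x := by positivity
      rw [pow_succ]
      nlinarith [pow_pos hp0 a, pow_pos hp0 b]
    have := pow_lt_pow_iff_right₀ (by exact_mod_cast hp1 : (1:ℝ) < (p:ℝ)) |>.mp h5
    omega
  have hy := key y y' h1 h2'
  have hy' := key y' y h1' h2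
  omega


lemma logb_pow_mul {p : ℕ} (hp1 : 1 < p) (x y : ℕ) :
    Real.logb p ((2 ^ x * p ^ y : ℕ) : ℝ) = x * Real.logb p 2 + y := by
  have hp0 : (0:ℝ) < p := by positivity
  have h2 : ((2:ℝ) ^ x) ≠ 0 := by positivity
  have h3 : ((p:ℝ) ^ y) ≠ 0 := by positivity
  push_cast
  rw [Real.logb_mul h2 h3, Real.logb_pow, Real.logb_pow, Real.logb_self_eq_one (by exact_mod_cast hp1)]
  ring

lemma irrational_logb2 {p : ℕ} (hodd : Odd p) (hp1 : 1 < p) : Irrational (Real.logb p 2) := by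
  rw [Irrational]
  intro hmem
  obtain ⟨q, hq⟩ := hmem
  have hp1' : (1:ℝ) < p := by exact_mod_cast hp1
  have hlogp : 0 < Real.log p := Real.log_pos hp1'
  have hlog2 : 0 < Real.log 2 := Real.log_pos (by norm_num)
  have halpha : 0 < Real.logb p 2 := Real.logb_pos hp1' (by norm_num)
  have hq0 : (0:ℝ) < q := by rw [hq]; exact halpha
  have hqq : (0:ℚ) < q := by exact_mod_cast hq0
  have hnum : 0 < q.num := Rat.num_pos.mpr hqq
  -- log 2 * den = num * log p
  have key : Real.log 2 * q.den = q.num * Real.log p := by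
    have : (q:ℝ) = Real.log 2 / Real.log p := by rw [hq, Real.logb]
    rw [Rat.cast_def] at this
    field_simp at this
    push_cast
    linarith [this]
  -- 2 ^ den = p ^ num
  have hexp : ((2:ℝ)) ^ (q.den) = (p:ℝ) ^ (q.num.toNat) := by
    have h1 : Real.log ((2:ℝ) ^ q.den) = Real.log ((p:ℝ) ^ q.num.toNat) := by
      rw [Real.log_pow, Real.log_pow]
      have : (q.num.toNat : ℝ) = (q.num : ℝ) := by
        have := Int.toNat_of_nonneg hnum.le
        exact_mod_cast congrArg (fun z : ℤ => (z : ℝ)) this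
      rw [this]; linarith [key]
    have h2 : (0:ℝ) < (2:ℝ) ^ q.den := by positivity
    have h3 : (0:ℝ) < (p:ℝ) ^ q.num.toNat := by positivity
    exact Real.log_injOn_pos (Set.mem_Ioi.mpr h2) (Set.mem_Ioi.mpr h3) h1
  have hnat : (2:ℕ) ^ q.den = p ^ q.num.toNat := by exact_mod_cast hexp
  have hden : 0 < q.den := q.pos
  have heven : Even ((2:ℕ) ^ q.den) := by
    refine (Nat.even_pow).mpr ⟨even_two, by omega⟩
  rw [hnat] at heven
  have hodd' : Odd (p ^ q.num.toNat) := hodd.pow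
  exact (Nat.not_even_iff_odd.mpr hodd') heven


lemma exists_good_rat {α : ℝ} (hα : Irrational α) (D : ℕ) :
    ∃ r : ℚ, D < r.den ∧ |α - (r:ℝ)| < 1 / (r.den:ℝ)^2 := by
  by_contra hcon
  push_neg at hcon
  have hinf := Real.infinite_rat_abs_sub_lt_one_div_den_sq_of_irrational hα
  apply hinf
  set M : ℤ := ⌈(|α|+1)*(D+1)⌉ with hM
  have hsub : {q : ℚ | |α - q| < 1/(q.den:ℝ)^2} ⊆
      (fun r : ℚ => ((r.num, r.den) : ℤ × ℕ)) ⁻¹' (Set.Icc (-M) M ×ˢ Set.Icc 0 D) := by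
    intro r hr
    simp only [Set.mem_setOf_eq] at hr
    have hden : r.den ≤ D := le_of_not_gt (fun h => absurd hr (not_lt.mpr (hcon r h)))
    have hden1 : (1:ℝ) ≤ r.den := by exact_mod_cast r.pos
    have h1 : |α - r| < 1 := by
      calc |α - r| < 1/(r.den:ℝ)^2 := hr
        _ ≤ 1 := by rw [div_le_one (by positivity)]; nlinarith
    have hrabs : |(r:ℝ)| ≤ |α| + 1 := by
      have := abs_sub_abs_le_abs_sub (r:ℝ) α
      rw [abs_sub_comm] at h1
      linarith
    have hnum : |(r.num:ℝ)| ≤ (|α|+1)*(D+1) := by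
      have hcast : (r:ℝ) = (r.num:ℝ)/(r.den:ℝ) := by rw [Rat.cast_def]
      have : |(r.num:ℝ)| = |(r:ℝ)| * r.den := by
        rw [hcast, abs_div, abs_of_nonneg (by positivity : (0:ℝ) ≤ (r.den:ℝ))]
        field_simp
      rw [this]
      have hDr : (r.den:ℝ) ≤ D + 1 := by
        have : (r.den:ℕ) ≤ D + 1 := by omega
        exact_mod_cast this
      have h0 : (0:ℝ) ≤ |α| + 1 := by positivity
      nlinarith [abs_nonneg (r:ℝ), abs_nonneg α]
    constructor
    · simp only [Set.mem_Icc]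
      have hMr : ((|α|+1)*(D+1) : ℝ) ≤ (M:ℝ) := Int.le_ceil _
      have : |(r.num:ℝ)| ≤ (M:ℝ) := le_trans hnum hMr
      have habs : |r.num| ≤ M := by exact_mod_cast this
      exact abs_le.mp habs
    · simp only [Set.mem_Icc]; exact ⟨Nat.zero_le _, hden⟩
  have hfin : (Set.Icc (-M) M ×ˢ Set.Icc 0 D : Set (ℤ × ℕ)).Finite :=
    (Set.finite_Icc _ _).prod (Set.finite_Icc _ _)
  have hinj : Function.Injective (fun r : ℚ => ((r.num, r.den) : ℤ × ℕ)) := by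
    intro a b hab
    simp only [Prod.mk.injEq] at hab
    exact Rat.ext hab.1 hab.2
  exact (hfin.preimage hinj.injOn).subset hsub

lemma block_count {α ℓ : ℝ} (hα : Irrational α) (hα0 : 0 < α) (hl0 : 0 ≤ ℓ) (hl1 : ℓ < 1) :
    ∃ q : ℕ, 0 < q ∧ ∀ j₀ : ℤ,
      (1 - ℓ) / 2 * q ≤ (((Finset.range q).filter
          (fun i : ℕ => fr α ℓ (j₀ + (i:ℤ)))).card : ℝ) := by
  classical
  set η := 1 - ℓ with hηdef
  have hη0 : 0 < η := by simp [hηdef]; linarith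
  set D : ℕ := ⌈6/η⌉₊ + ⌈α⁻¹⌉₊ with hD
  have hD1 : 6/η ≤ (D:ℝ) := by
    have := Nat.le_ceil (6/η)
    have h2 : ((⌈6/η⌉₊ : ℕ):ℝ) ≤ D := by exact_mod_cast Nat.le_add_right _ _
    linarith
  have hD2 : α⁻¹ ≤ (D:ℝ) := by
    have := Nat.le_ceil α⁻¹
    have h2 : ((⌈α⁻¹⌉₊ : ℕ):ℝ) ≤ D := by exact_mod_cast Nat.le_add_left _ _
    linarith
  obtain ⟨r, hrD, hr⟩ := exists_good_rat hα D
  set q : ℕ := r.den with hqdef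
  have hq0 : 0 < q := r.pos
  have hq0' : (0:ℝ) < q := by exact_mod_cast hq0
  haveI : NeZero q := ⟨by omega⟩
  have hDq : (D:ℝ) < q := by exact_mod_cast hrD
  have hq6 : 6 ≤ η * q := by
    have h1 : 6/η ≤ (q:ℝ) := by linarith
    calc (6:ℝ) = (6/η) * η := by field_simp
      _ ≤ q * η := by apply mul_le_mul_of_nonneg_right h1 hη0.le
      _ = η * q := by ring
  have hqα : 1/(q:ℝ) ≤ α := by
    have h1 : α⁻¹ ≤ (q:ℝ) := by linarith
    rw [div_le_iff₀ hq0'] at *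
    calc (1:ℝ) = α * α⁻¹ := by field_simp
      _ ≤ α * q := by apply mul_le_mul_of_nonneg_left h1 hα0.le
  -- numerator positive
  have hrnum : 0 < r.num := by
    have h1 : α - 1/(q:ℝ)^2 < (r:ℝ) := by
      have h := abs_lt.mp hr
      linarith [h.1]
    have hq1 : (1:ℝ) ≤ q := by exact_mod_cast hq0
    have h2 : 1/(q:ℝ)^2 ≤ α := by
      calc 1/(q:ℝ)^2 = (1/q) * (1/q) := by ring
      _ ≤ α * 1 := by
          apply mul_le_mul hqα _ (by positivity) hα0.le
          rw [div_le_one hq0']; exact hq1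
      _ = α := by ring
    have h3 : (0:ℝ) < (r:ℝ) := by linarith
    exact Rat.num_pos.mpr (by exact_mod_cast h3)
  
  set A : ℕ := r.num.toNat with hAdef
  have hAZ : (A:ℤ) = r.num := Int.toNat_of_nonneg hrnum.le
  have hcop : A.Coprime q := by
    have h1 : r.num.natAbs = A := by
      have h2 := Int.natAbs_of_nonneg hrnum.le
      omega
    rw [← h1]; exact r.reduced
  have hrA : (r:ℝ) = (A:ℝ)/q := by
    rw [Rat.cast_def]
    congr 1
    rw [← hAZ]
    push_cast
    ring
  set θ : ℝ := α - (A:ℝ)/q with hθdef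
  have hθ : |θ| < 1/(q:ℝ)^2 := by rw [hθdef, ← hrA]; exact hr
  refine ⟨q, hq0, ?_⟩
  intro j₀
  set c := Int.fract (j₀ * α) with hc
  have hc0 : 0 ≤ c := Int.fract_nonneg _
  have hc1 : c < 1 := Int.fract_lt_one _
  set lam : ℝ := η - 2/q with hlam
  have h2q : 2/(q:ℝ) ≤ η/3 := by
    rw [div_le_div_iff₀ hq0' (by norm_num)]
    linarith
  have hlam0 : 0 < lam := by rw [hlam]; linarith
  have hη1 : η ≤ 1 := by rw [hηdef]; linarith
  set w : ℝ := q * (ℓ + 1/q - c) with hw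
  set s₀ : ℤ := ⌈w⌉ with hs₀
  set s₁ : ℤ := ⌈w + lam * q⌉ with hs₁
  have hs0ge : w ≤ (s₀:ℝ) := Int.le_ceil _
  have hs0lt : (s₀:ℝ) < w + 1 := Int.ceil_lt_add_one _
  have hs1ge : w + lam*q ≤ (s₁:ℝ) := Int.le_ceil _
  have hs1lt : (s₁:ℝ) < w + lam*q + 1 := Int.ceil_lt_add_one _
  have hlamq2 : 2 ≤ lam * q := by
    have : lam * q = η * q - 2 := by rw [hlam]; field_simp
    linarith
  have hs01 : s₀ ≤ s₁ := by
    have : (s₀:ℝ) ≤ (s₁:ℝ) := by linarith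
    exact_mod_cast this
  have hcard : lam * q - 1 ≤ ((Finset.Ico s₀ s₁).card : ℝ) := by
    rw [Int.card_Ico]
    have h1 : ((s₁ - s₀).toNat : ℝ) = ((s₁:ℝ) - s₀) := by
      have h0 : (0:ℤ) ≤ s₁ - s₀ := by omega
      have h2 := Int.toNat_of_nonneg h0
      have h3 := congrArg (fun z : ℤ => (z:ℝ)) h2
      push_cast at h3
      linarith [h3]
    linarith [h1]
  -- the unit
  set U : (ZMod q)ˣ := ZMod.unitOfCoprime A hcop with hU
  set F : ℤ → ℕ := fun s => ZMod.val ((s : ZMod q) * ((U⁻¹ : (ZMod q)ˣ) : ZMod q)) with hF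
  have hFcast : ∀ s : ℤ, ((F s : ℕ) : ZMod q) = (s : ZMod q) * ((U⁻¹ : (ZMod q)ˣ) : ZMod q) :=
    fun s => ZMod.natCast_rightInverse _
  have hFA : ∀ s : ℤ, (((F s) * A : ℤ) : ZMod q) = (s : ZMod q) := by
    intro s
    push_cast
    rw [hFcast s]
    have hUA : ((U : (ZMod q)ˣ) : ZMod q) = (A : ZMod q) := ZMod.coe_unitOfCoprime A hcop
    calc (s : ZMod q) * ((U⁻¹ : (ZMod q)ˣ) : ZMod q) * (A : ZMod q)
        = (s : ZMod q) * (((U⁻¹ : (ZMod q)ˣ) : ZMod q) * ((U : (ZMod q)ˣ) : ZMod q)) := by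
          rw [hUA]; ring
      _ = (s : ZMod q) := by
          rw [← Units.val_mul, inv_mul_cancel, Units.val_one, mul_one]
  have hFdvd : ∀ s : ℤ, ∃ w' : ℤ, ((F s) : ℤ) * A = s + q * w' := by
    intro s
    have h0 : (((F s : ℤ) * (A:ℤ) - s : ℤ) : ZMod q) = 0 := by
      have h2 := hFA s
      have h3 : (((F s : ℤ) * (A:ℤ) - s : ℤ) : ZMod q)
          = (((F s) * A : ℤ) : ZMod q) - (s : ZMod q) := by push_cast; ring
      rw [h3]
      rw [show (((F s) * A : ℤ) : ZMod q) = ((((F s) * A : ℕ) : ℤ) : ZMod q) by push_cast; ring] at *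
      push_cast at h2 ⊢
      rw [h2, sub_self]
    have := (ZMod.intCast_zmod_eq_zero_iff_dvd _ q).mp h0
    obtain ⟨k, hk⟩ := this
    exact ⟨k, by linarith [hk]⟩
  
  have hwq : w / q = ℓ + 1/q - c := by rw [hw]; field_simp
  have hmap : ∀ s ∈ Finset.Ico s₀ s₁,
      F s ∈ (Finset.range q).filter (fun i : ℕ => fr α ℓ (j₀ + (i:ℤ))) := by
    intro s hs
    rw [Finset.mem_Ico] at hs
    have hFlt : F s < q := ZMod.val_lt _
    obtain ⟨w', hw'⟩ := hFdvd s
    have hsr : (s₀:ℝ) ≤ (s:ℝ) := by exact_mod_cast hs.1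
    have hsr' : (s:ℝ) ≤ (s₁:ℝ) - 1 := by
      have h3 : s ≤ s₁ - 1 := by omega
      have h4 : ((s:ℝ)) ≤ ((s₁ - 1 : ℤ):ℝ) := by exact_mod_cast h3
      push_cast at h4
      linarith
    have hb1 : ℓ + 1/q ≤ c + (s:ℝ)/q := by
      have h1 : w ≤ (s:ℝ) := le_trans hs0ge hsr
      have h2 : w/q ≤ (s:ℝ)/q := by apply div_le_div_of_nonneg_right h1 hq0'.le
      rw [hwq] at h2
      linarith
    have hb2 : c + (s:ℝ)/q < 1 - 1/q := by
      have h1 : (s:ℝ) < w + lam * q := by linarith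
      have h2 : (s:ℝ)/q < (w + lam*q)/q := by apply div_lt_div_of_pos_right h1 hq0'
      have h3 : (w + lam*q)/q = w/q + lam := by field_simp
      rw [h3, hwq] at h2
      have hdiv2 : (2:ℝ)/q = 2*(1/q) := by ring
      have hlam' : lam = 1 - ℓ - 2/(q:ℝ) := by rw [hlam, hηdef]
      rw [hlam'] at h2
      linarith
    set v : ℝ := c + (s:ℝ)/q + (F s : ℝ) * θ with hv
    have hiθ : |(F s : ℝ) * θ| < 1/q := by
      have h1 : (F s : ℝ) ≤ (q:ℝ) := by
        exact_mod_cast Nat.le_of_lt hFlt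
      have h2 : |(F s:ℝ) * θ| = (F s:ℝ) * |θ| := by
        rw [abs_mul, abs_of_nonneg (by positivity : (0:ℝ) ≤ (F s:ℝ))]
      rw [h2]
      calc (F s:ℝ) * |θ| ≤ (q:ℝ) * |θ| := by
            apply mul_le_mul_of_nonneg_right h1 (abs_nonneg _)
        _ < (q:ℝ) * (1/q^2) := by apply mul_lt_mul_of_pos_left hθ hq0'
        _ = 1/q := by field_simp
    have hiθ' := abs_lt.mp hiθ
    have hv0 : ℓ ≤ v := by rw [hv]; linarith [hiθ'.1]
    have hv1 : v < 1 := by rw [hv]; linarith [hiθ'.2]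
    have hkey : Int.fract (((j₀:ℝ) + (F s:ℝ)) * α) = v := by
      have hFA' : (F s:ℝ) * ((A:ℝ)/q) = (s:ℝ)/q + (w':ℝ) := by
        have h5 : ((F s : ℝ)) * (A:ℝ) = (s:ℝ) + (q:ℝ)*(w':ℝ) := by exact_mod_cast hw'
        field_simp
        linarith
      have hj : (j₀:ℝ)*α = (⌊(j₀:ℝ)*α⌋:ℝ) + c := by
        rw [hc]; linarith [Int.floor_add_fract ((j₀:ℝ)*α)]
      have hsplit : ((j₀:ℝ) + (F s:ℝ)) * α = v + ((⌊(j₀:ℝ)*α⌋ + w' : ℤ) : ℝ) := by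
        have hthis : (F s:ℝ) * α = (F s:ℝ)*((A:ℝ)/q) + (F s:ℝ)*θ := by rw [hθdef]; ring
        have hexp : ((j₀:ℝ) + (F s:ℝ))*α = (j₀:ℝ)*α + (F s:ℝ)*α := by ring
        have hz : ((⌊(j₀:ℝ)*α⌋ + w' : ℤ):ℝ) = (⌊(j₀:ℝ)*α⌋:ℝ) + (w':ℝ) := by push_cast; ring
        rw [hv, hz]
        linarith [hj, hthis, hFA', hexp]
      rw [hsplit, Int.fract_add_intCast]
      exact Int.fract_eq_self.mpr ⟨le_trans hl0 hv0, hv1⟩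
    rw [Finset.mem_filter]
    refine ⟨Finset.mem_range.mpr hFlt, ?_⟩
    rw [fr_iff]
    have hcc : (((j₀ + ((F s:ℕ):ℤ) : ℤ)):ℝ) = (j₀:ℝ) + (F s:ℝ) := by push_cast; ring
    rw [hcc, hkey]
    exact hv0
  have hinj : Set.InjOn F ↑(Finset.Ico s₀ s₁) := by
    intro s hs s' hs' heq
    simp only [Finset.coe_Ico, Set.mem_Ico] at hs hs'
    have e1 := hFcast s
    have e2 := hFcast s'
    rw [heq] at e1
    have h2 : (s:ZMod q) = (s':ZMod q) := by
      have h3 : (s:ZMod q) * ((U⁻¹ : (ZMod q)ˣ) : ZMod q) = (s':ZMod q) * ((U⁻¹ : (ZMod q)ˣ) : ZMod q) := by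
        rw [← e1, ← e2]
      have h4 := congrArg (fun z : ZMod q => z * ((U : (ZMod q)ˣ) : ZMod q)) h3
      simpa [mul_assoc, ← Units.val_mul] using h4
    have hdvd : (q:ℤ) ∣ (s - s') := by
      rw [← ZMod.intCast_zmod_eq_zero_iff_dvd]
      push_cast
      rw [h2, sub_self]
    by_contra hne
    have hpos : 0 < |s - s'| := by
      rcases lt_or_gt_of_ne (fun h => hne (by omega) : s - s' ≠ 0) with h | h
      · rw [abs_of_neg h]; omega
      · rw [abs_of_pos h]; omega
    have hle := Int.le_of_dvd hpos ((dvd_abs _ _).mpr hdvd)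
    have hlen : (s₁:ℝ) - s₀ < q := by
      have hlamq : lam * q = η*q - 2 := by rw [hlam]; field_simp
      have hηq : η * q ≤ q := by
        calc η * q ≤ 1 * q := by apply mul_le_mul_of_nonneg_right hη1 hq0'.le
          _ = q := by ring
      linarith
    have habs : (|s - s'| : ℝ) < q := by
      rw [abs_sub_lt_iff]
      constructor
      · push_cast
        have l1 : (s:ℝ) < s₁ := by exact_mod_cast hs.2
        have l2 : (s₀:ℝ) ≤ s' := by exact_mod_cast hs'.1
        linarith
      · push_cast
        have l1 : (s':ℝ) < s₁ := by exact_mod_cast hs'.2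
        have l2 : (s₀:ℝ) ≤ s := by exact_mod_cast hs.1
        linarith
    have : (q:ℤ) ≤ |s - s'| := hle
    have : ((q:ℤ):ℝ) ≤ (|s - s'| : ℝ) := by exact_mod_cast this
    push_cast at this
    linarith
  have hcount := Finset.card_le_card_of_injOn F hmap hinj
  have hlamq : lam * q = η*q - 2 := by rw [hlam]; field_simp
  calc (1 - ℓ)/2 * q = η/2 * q := by rw [hηdef]
    _ ≤ lam * q - 1 := by nlinarith [hq6, hlamq]
    _ ≤ ((Finset.Ico s₀ s₁).card : ℝ) := hcard
    _ ≤ _ := by exact_mod_cast hcount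

lemma window_count {α ℓ : ℝ} (hα : Irrational α) (hα0 : 0 < α) (hl0 : 0 ≤ ℓ) (hl1 : ℓ < 1) :
    ∃ q : ℕ, 0 < q ∧ ∀ (c : ℤ) (K : ℕ), 2 * q ≤ K + 1 →
      (1 - ℓ)/4 * (K+1) ≤ (((Finset.range (K+1)).filter
        (fun x : ℕ => fr α ℓ ((x:ℤ) + c))).card : ℝ) := by
  classical
  obtain ⟨q, hq0, hblock⟩ := block_count hα hα0 hl0 hl1
  refine ⟨q, hq0, ?_⟩
  intro c K hK
  have hq0' : (0:ℝ) < q := by exact_mod_cast hq0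
  set η := 1 - ℓ with hηdef
  have hη0 : 0 < η := by rw [hηdef]; linarith
  set P : ℕ → Prop := fun x => fr α ℓ ((x:ℤ) + c) with hP
  -- block bound for shifted blocks
  have hblockM : ∀ M : ℕ,
      η/2 * q + (((Finset.range M).filter P).card : ℝ)
        ≤ (((Finset.range (M + q)).filter P).card : ℝ) := by
    intro M
    have hsub1 : (Finset.range M).filter P ⊆ (Finset.range (M+q)).filter P :=
      Finset.filter_subset_filter _ (Finset.range_subset_range.mpr (Nat.le_add_right _ _))
    have himg : ((Finset.range q).filter (fun i => P (M + i))).image (fun i => M + i)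
        ⊆ (Finset.range (M+q)).filter P := by
      intro x hx
      simp only [Finset.mem_image, Finset.mem_filter, Finset.mem_range] at hx ⊢
      obtain ⟨i, ⟨hi, hPi⟩, rfl⟩ := hx
      exact ⟨by omega, hPi⟩
    have hdisj : Disjoint ((Finset.range M).filter P)
        (((Finset.range q).filter (fun i => P (M + i))).image (fun i => M + i)) := by
      rw [Finset.disjoint_left]
      intro x hx hx'
      simp only [Finset.mem_filter, Finset.mem_range] at hx
      simp only [Finset.mem_image, Finset.mem_filter, Finset.mem_range] at hx'
      obtain ⟨i, _, rfl⟩ := hx'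
      omega
    have hunion : ((Finset.range M).filter P) ∪
        (((Finset.range q).filter (fun i => P (M + i))).image (fun i => M + i))
        ⊆ (Finset.range (M+q)).filter P :=
      Finset.union_subset (hsub1) himg
    have hcardu := Finset.card_le_card hunion
    rw [Finset.card_union_of_disjoint hdisj] at hcardu
    have hinj : ((Finset.range q).filter (fun i => P (M + i))).card =
        (((Finset.range q).filter (fun i => P (M + i))).image (fun i => M + i)).card :=
      (Finset.card_image_of_injective _ (add_right_injective M)).symm
    -- block count
    have hble := hblock ((M:ℤ) + c)
    have hcongr : (Finset.range q).filter (fun i : ℕ => fr α ℓ (((M:ℤ) + c) + (i:ℤ)))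
        = (Finset.range q).filter (fun i => P (M + i)) := by
      apply Finset.filter_congr
      intro i _
      rw [hP]
      exact iff_of_eq (congrArg (fr α ℓ) (by push_cast; ring))
    rw [hcongr] at hble
    have : (1 - ℓ)/2 * q = η/2 * q := by rw [hηdef]
    rw [this] at hble
    have h1 : ((((Finset.range q).filter (fun i => P (M + i))).card : ℕ) : ℝ)
        + (((Finset.range M).filter P).card : ℝ)
        ≤ (((Finset.range (M+q)).filter P).card : ℝ) := by
      exact_mod_cast by
        rw [hinj]
        omega
    linarith
  -- induction
  have hind : ∀ d : ℕ, η/2 * q * d ≤ (((Finset.range (d*q)).filter P).card : ℝ) := by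
    intro d
    induction d with
    | zero => simp
    | succ d ih =>
      have h1 := hblockM (d*q)
      have h2 : (d+1)*q = d*q + q := by ring
      rw [h2]
      push_cast
      push_cast at ih
      linarith
  set d := (K+1)/q with hd
  have hdq : d * q ≤ K + 1 := by rw [hd]; exact Nat.div_mul_le_self _ _
  have hmono : (((Finset.range (d*q)).filter P).card : ℝ)
      ≤ (((Finset.range (K+1)).filter P).card : ℝ) := by
    exact_mod_cast Finset.card_le_card
      (Finset.filter_subset_filter _ (Finset.range_subset_range.mpr hdq))
  have hrem : K + 1 < d * q + q := by
    have h2 := Nat.div_add_mod (K+1) q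
    have h3 : (K+1) % q < q := Nat.mod_lt _ hq0
    have h4 : q * ((K+1)/q) + (K+1) % q < q * ((K+1)/q) + q := Nat.add_lt_add_left h3 _
    rw [h2] at h4
    rw [hd, Nat.mul_comm]
    exact h4
  have hdq2 : ((K:ℝ)+1)/2 ≤ (d*q : ℕ) := by
    have h2q : (2*q : ℕ) ≤ K + 1 := hK
    have c1 : ((K:ℝ)+1) < (d*q : ℕ) + q := by exact_mod_cast hrem
    have c2 : (2*(q:ℝ)) ≤ (K:ℝ)+1 := by exact_mod_cast h2q
    push_cast at c1 c2 ⊢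
    linarith
  have hfinal := hind d
  have hcast : ((d*q : ℕ) : ℝ) = (q:ℝ) * d := by push_cast; ring
  calc (1 - ℓ)/4 * (K+1) = η/4 * (K+1) := by rw [hηdef]
    _ ≤ η/2 * ((d*q : ℕ) : ℝ) := by
        rw [hcast]
        nlinarith [hdq2, hη0]
    _ = η/2 * q * d := by rw [hcast]; ring
    _ ≤ (((Finset.range (d*q)).filter P).card : ℝ) := hfinal
    _ ≤ _ := hmono

noncomputable def ApY (p : ℕ) (C : ℝ) (m x : ℕ) : ℕ :=
  if h : ∃ y : ℕ, m ≤ 2^x * p^y ∧ ((2^x * p^y : ℕ) : ℝ) < C * m then h.choose else 0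

noncomputable def ApAvail (p : ℕ) (C : ℝ) (K m : ℕ) : Finset ℕ :=
  (Finset.range (K+1)).filter
    (fun x => ∃ y : ℕ, m ≤ 2^x * p^y ∧ ((2^x * p^y : ℕ) : ℝ) < C * m)

noncomputable def ApPhi (p : ℕ) (C : ℝ) (m : ℕ) (X : Finset ℕ) : ℕ :=
  ∑ x ∈ X, 2^x * p^(ApY p C m x)

noncomputable def Apxc (p b : ℕ) : ℕ :=
  if h : ∃ x y : ℕ, b = 2^x * p^y then h.choose else 0

noncomputable def Apyc (p b : ℕ) : ℕ :=
  if h : ∃ x y : ℕ, b = 2^x * p^y then h.choose_spec.choose else 0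

lemma Apxc_spec {p b : ℕ} (h : ∃ x y : ℕ, b = 2^x * p^y) :
    b = 2^(Apxc p b) * p^(Apyc p b) := by
  rw [Apxc, Apyc, dif_pos h, dif_pos h]
  exact h.choose_spec.choose_spec

lemma ApY_spec {p m x : ℕ} {C : ℝ} (h : ∃ y : ℕ, m ≤ 2^x * p^y ∧ ((2^x*p^y : ℕ):ℝ) < C * m) :
    m ≤ 2^x * p^(ApY p C m x) ∧ ((2^x*p^(ApY p C m x) : ℕ):ℝ) < C * m := by
  rw [ApY, dif_pos h]; exact h.choose_spec

lemma cover {p : ℕ} (hodd : Odd p) (hp1 : 1 < p) {C : ℝ} (hC1 : 1 < C) (hCp : C < (p:ℝ))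
    {N K n : ℕ} (hK : (C * N : ℝ) ≤ 2^K) (hn1 : 1 ≤ n) (hnN : n ≤ N)
    (hrep : ∃ B : Finset ℕ, ∃ hB : B.Nonempty, (∀ b ∈ B, ∃ x y : ℕ, b = 2^x*p^y) ∧
      (∑ b ∈ B, b) = n ∧ ∀ b ∈ B, (b:ℝ) < C * (B.min' hB : ℝ)) :
    ∃ m ∈ (Finset.Icc 1 N).filter (fun m => ∃ x y : ℕ, m = 2^x * p^y),
      n ∈ (ApAvail p C K m).powerset.image (ApPhi p C m) := by
  obtain ⟨B, hB, hform, hsum, hshort⟩ := hrep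
  set m := B.min' hB with hm
  have hmB : m ∈ B := B.min'_mem hB
  have hm1 : 1 ≤ m := by
    obtain ⟨x, y, hxy⟩ := hform m hmB
    have : 0 < 2^x * p^y := by positivity
    omega
  have hmn : m ≤ n := by
    rw [← hsum]
    exact Finset.single_le_sum (f := fun b : ℕ => b) (fun i _ => Nat.zero_le i) hmB
  have hm0 : (0:ℝ) < m := by exact_mod_cast hm1
  -- each b in B satisfies the window condition at x-coordinate
  have hwin : ∀ b ∈ B, m ≤ 2^(Apxc p b) * p^(Apyc p b) ∧
      ((2^(Apxc p b) * p^(Apyc p b) : ℕ):ℝ) < C * m := by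
    intro b hb
    have hrepb := Apxc_spec (hform b hb)
    constructor
    · rw [← hrepb]; exact Finset.min'_le B b hb
    · rw [← hrepb]; exact hshort b hb
  -- Apxc b is in range K+1
  have hxcK : ∀ b ∈ B, Apxc p b < K + 1 := by
    intro b hb
    have h1 := (hwin b hb).2
    have h2 : ((2:ℝ))^(Apxc p b) ≤ ((2^(Apxc p b) * p^(Apyc p b) : ℕ):ℝ) := by
      push_cast
      have hp0 : (1:ℝ) ≤ (p:ℝ)^(Apyc p b) := by
        apply one_le_pow₀
        exact_mod_cast hp1.le
      nlinarith [pow_pos (by norm_num : (0:ℝ) < 2) (Apxc p b)]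
    have h3 : C * m ≤ C * N := by
      apply mul_le_mul_of_nonneg_left _ (by linarith)
      exact_mod_cast le_trans hmn hnN
    have h4 : ((2:ℝ))^(Apxc p b) < 2^K := by
      calc ((2:ℝ))^(Apxc p b) ≤ _ := h2
        _ < C * m := h1
        _ ≤ C * N := h3
        _ ≤ 2^K := hK
    have := (pow_lt_pow_iff_right₀ (by norm_num : (1:ℝ) < 2)).mp h4
    omega
  -- ApY agrees with Apyc
  have hY : ∀ b ∈ B, ApY p C m (Apxc p b) = Apyc p b := by
    intro b hb
    have hex : ∃ y : ℕ, m ≤ 2^(Apxc p b) * p^y ∧ ((2^(Apxc p b)*p^y : ℕ):ℝ) < C * m :=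
      ⟨Apyc p b, hwin b hb⟩
    have hspec := ApY_spec (p := p) (C := C) hex
    exact y_window_unique hp1 hC1 hCp hspec.1 hspec.2 (hwin b hb).1 (hwin b hb).2
  -- injectivity of Apxc on B
  have hinj : Set.InjOn (Apxc p) ↑B := by
    intro b hb b' hb' heq
    have h1 := Apxc_spec (hform b hb)
    have h2 := Apxc_spec (hform b' hb')
    have h3 : Apyc p b = Apyc p b' := by
      apply y_window_unique hp1 hC1 hCp (hwin b hb).1 (hwin b hb).2
      · rw [heq]; exact (hwin b' hb').1
      · rw [heq]; exact (hwin b' hb').2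
    rw [h1, h2, heq, h3]
  refine ⟨m, ?_, ?_⟩
  · rw [Finset.mem_filter, Finset.mem_Icc]
    exact ⟨⟨hm1, le_trans hmn hnN⟩, hform m hmB⟩
  · rw [Finset.mem_image]
    refine ⟨B.image (Apxc p), ?_, ?_⟩
    · rw [Finset.mem_powerset]
      intro x hx
      rw [Finset.mem_image] at hx
      obtain ⟨b, hb, rfl⟩ := hx
      rw [ApAvail, Finset.mem_filter, Finset.mem_range]
      exact ⟨hxcK b hb, ⟨Apyc p b, hwin b hb⟩⟩
    · rw [ApPhi, Finset.sum_image (fun b hb b' hb' h => hinj hb hb' h)]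
      rw [← hsum]
      apply Finset.sum_congr rfl
      intro b hb
      rw [hY b hb, ← Apxc_spec (hform b hb)]

lemma avail_bound {p : ℕ} (hodd : Odd p) (hp1 : 1 < p) {C : ℝ} (hC1 : 1 < C) (hCp : C < (p:ℝ)) :
    ∃ q : ℕ, 0 < q ∧ ∀ K m : ℕ, (∃ a b : ℕ, m = 2^a * p^b) → 2*q ≤ K+1 →
      ((ApAvail p C K m).card : ℝ) ≤ (1 - (1 - Real.logb p C)/4) * (K+1) := by
  have hp1' : (1:ℝ) < p := by exact_mod_cast hp1
  set α := Real.logb p 2 with hα'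
  set ℓ := Real.logb p C with hℓ'
  have hα : Irrational α := irrational_logb2 hodd hp1
  have hα0 : 0 < α := Real.logb_pos hp1' (by norm_num)
  have hℓ0 : 0 ≤ ℓ := Real.logb_nonneg hp1' hC1.le
  have hC0 : (0:ℝ) < C := by linarith
  have hℓ1 : ℓ < 1 := by
    have h1 : Real.log C < Real.log p := Real.log_lt_log hC0 hCp
    have h2 : 0 < Real.log p := Real.log_pos hp1'
    rw [hℓ', Real.logb, div_lt_one h2]
    exact h1
  obtain ⟨q, hq0, hwin⟩ := window_count hα hα0 hℓ0 hℓ1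
  refine ⟨q, hq0, ?_⟩
  rintro K m ⟨a, b, rfl⟩ hK
  set m := 2^a * p^b with hm
  have hm1 : 0 < m := by positivity
  have hm0 : (0:ℝ) < m := by exact_mod_cast hm1
  set Bad : Finset ℕ := (Finset.range (K+1)).filter (fun x : ℕ => fr α ℓ ((x:ℤ) + (-(a:ℤ)))) with hBad
  -- availability implies fract < ℓ, so disjoint from Bad
  have hdisj : Disjoint (ApAvail p C K m) Bad := by
    rw [Finset.disjoint_left]
    intro x hx hxbad
    rw [ApAvail, Finset.mem_filter] at hx
    obtain ⟨-, y, hy1, hy2⟩ := hx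
    rw [hBad, Finset.mem_filter] at hxbad
    have hfr := hxbad.2
    rw [fr_iff] at hfr
    -- logb computations
    have hxy0 : (0:ℝ) < ((2^x * p^y : ℕ):ℝ) := by positivity
    have hle : Real.logb p m ≤ Real.logb p ((2^x*p^y : ℕ):ℝ) := by
      rw [Real.logb, Real.logb]
      apply div_le_div_of_nonneg_right _ (Real.log_pos hp1').le
      · exact Real.log_le_log hm0 (by exact_mod_cast hy1)
    have hlt : Real.logb p ((2^x*p^y : ℕ):ℝ) < Real.logb p (C * m) := by
      rw [Real.logb, Real.logb]
      apply div_lt_div_of_pos_right _ (Real.log_pos hp1')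
      exact Real.log_lt_log hxy0 hy2
    have hCm : Real.logb p (C * m) = ℓ + Real.logb p m := by
      rw [Real.logb_mul (ne_of_gt hC0) (ne_of_gt hm0), hℓ']
    have hlm : Real.logb p (m:ℝ) = a * α + b := logb_pow_mul hp1 a b
    have hlxy : Real.logb p ((2^x*p^y : ℕ):ℝ) = x * α + y := logb_pow_mul hp1 x y
    rw [hlxy, hlm] at hle
    rw [hlxy, hCm, hlm] at hlt
    set v : ℝ := ((x:ℝ) - a) * α + ((y:ℝ) - b) with hv
    have hv0 : 0 ≤ v := by rw [hv]; ring_nf; ring_nf at hle; linarith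
    have hv1 : v < ℓ := by rw [hv]; ring_nf; ring_nf at hlt; linarith
    have hfr2 : Int.fract (((((x:ℤ) + (-(a:ℤ))) : ℤ):ℝ) * α) = v := by
      have hsplit : ((((x:ℤ) + (-(a:ℤ))) : ℤ):ℝ) * α = v + (((b:ℤ) - (y:ℤ)):ℝ) := by
        rw [hv]; push_cast; ring
      rw [hsplit]
      rw [show (((b:ℤ) - (y:ℤ)):ℝ) = (((b - y : ℤ)):ℝ) by push_cast; ring]
      rw [Int.fract_add_intCast]
      exact Int.fract_eq_self.mpr ⟨hv0, by linarith⟩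
    rw [hfr2] at hfr
    linarith
  have hBadsub : Bad ⊆ Finset.range (K+1) := Finset.filter_subset _ _
  have hAvsub : ApAvail p C K m ⊆ Finset.range (K+1) := Finset.filter_subset _ _
  have hcards : (ApAvail p C K m).card + Bad.card ≤ K + 1 := by
    rw [← Finset.card_union_of_disjoint hdisj]
    calc (ApAvail p C K m ∪ Bad).card ≤ (Finset.range (K+1)).card :=
          Finset.card_le_card (Finset.union_subset hAvsub hBadsub)
      _ = K + 1 := Finset.card_range _
  have hbad := hwin (-(a:ℤ)) K hK
  have hcards' : ((ApAvail p C K m).card : ℝ) + (Bad.card : ℝ) ≤ (K:ℝ) + 1 := by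
    exact_mod_cast hcards
  have hbad' : (1 - ℓ)/4 * ((K:ℝ)+1) ≤ (Bad.card : ℝ) := by rw [hBad]; exact hbad
  linarith

lemma upper_tendsto (B δ : ℝ) (hB : 0 ≤ B) (hδ0 : 0 < δ) :
    Tendsto (fun N : ℕ => ((Nat.log 2 N + 1 : ℕ):ℝ)^2 * B * (N:ℝ)^(-δ)) atTop (nhds 0) := by
  have hδ2 : 0 < δ/2 := by linarith
  have t1 : Tendsto (fun x : ℝ => Real.log x * x^(-(δ/2))) atTop (nhds 0) := by
    have h := (isLittleO_log_rpow_atTop hδ2).tendsto_div_nhds_zero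
    apply h.congr'
    filter_upwards [eventually_gt_atTop (0:ℝ)] with x hx
    rw [Real.rpow_neg hx.le, div_eq_mul_inv]
  have t2 : Tendsto (fun x : ℝ => x^(-(δ/2))) atTop (nhds 0) := tendsto_rpow_neg_atTop hδ2
  have hw : Tendsto (fun x : ℝ => (Real.logb 2 x + 1) * x^(-(δ/2))) atTop (nhds 0) := by
    have hsum := (t1.const_mul (1/Real.log 2)).add t2
    rw [mul_zero, add_zero] at hsum
    apply hsum.congr'
    filter_upwards [eventually_gt_atTop (0:ℝ)] with x hx
    rw [Real.logb]
    have hl2 : Real.log 2 ≠ 0 := by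
      have := Real.log_pos (by norm_num : (1:ℝ) < 2); linarith
    field_simp
  -- v tends to zero
  have hv : Tendsto (fun x : ℝ => (Real.logb 2 x + 1)^2 * B * x^(-δ)) atTop (nhds 0) := by
    have hprod := (hw.mul hw).const_mul B
    rw [mul_zero, mul_zero] at hprod
    apply hprod.congr'
    filter_upwards [eventually_gt_atTop (0:ℝ)] with x hx
    have hx2 : x^(-(δ/2)) * x^(-(δ/2)) = x^(-δ) := by
      rw [← Real.rpow_add hx]
      congr 1
      ring
    calc B * ((Real.logb 2 x + 1) * x^(-(δ/2)) * ((Real.logb 2 x + 1) * x^(-(δ/2))))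
        = (Real.logb 2 x + 1)^2 * B * (x^(-(δ/2)) * x^(-(δ/2))) := by ring
      _ = (Real.logb 2 x + 1)^2 * B * x^(-δ) := by rw [hx2]
  -- compose with natCast
  have hvn : Tendsto (fun N : ℕ => (Real.logb 2 (N:ℝ) + 1)^2 * B * (N:ℝ)^(-δ)) atTop (nhds 0) :=
    hv.comp tendsto_natCast_atTop_atTop
  -- squeeze
  apply tendsto_of_tendsto_of_tendsto_of_le_of_le' tendsto_const_nhds hvn
  · filter_upwards with N
    positivity
  · filter_upwards [eventually_ge_atTop 1] with N hN
    have hN0 : (0:ℝ) < N := by exact_mod_cast hN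
    have hlog : ((Nat.log 2 N : ℕ):ℝ) ≤ Real.logb 2 (N:ℝ) := by
      have h1 : (2:ℕ)^(Nat.log 2 N) ≤ N := Nat.pow_log_le_self 2 (by omega)
      have h2 : ((2:ℝ))^((Nat.log 2 N : ℕ):ℝ) ≤ (N:ℝ) := by
        rw [Real.rpow_natCast]
        exact_mod_cast h1
      exact (Real.le_logb_iff_rpow_le (by norm_num) hN0).mpr h2
    have hmono : (((Nat.log 2 N + 1 : ℕ)):ℝ)^2 ≤ (Real.logb 2 (N:ℝ) + 1)^2 := by
      have h3 : (((Nat.log 2 N + 1 : ℕ)):ℝ) = ((Nat.log 2 N : ℕ):ℝ) + 1 := by push_cast; ring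
      rw [h3]
      have h4 : (0:ℝ) ≤ ((Nat.log 2 N : ℕ):ℝ) + 1 := by positivity
      nlinarith
    have h5 : (0:ℝ) ≤ B * (N:ℝ)^(-δ) := by positivity
    calc (((Nat.log 2 N + 1 : ℕ)):ℝ)^2 * B * (N:ℝ)^(-δ)
        = (((Nat.log 2 N + 1 : ℕ)):ℝ)^2 * (B * (N:ℝ)^(-δ)) := by ring
      _ ≤ (Real.logb 2 (N:ℝ) + 1)^2 * (B * (N:ℝ)^(-δ)) := by
          apply mul_le_mul_of_nonneg_right hmono h5
      _ = (Real.logb 2 (N:ℝ) + 1)^2 * B * (N:ℝ)^(-δ) := by ring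

theorem Ap_short_sums_density_zero (p : ℕ) (hp : Odd p) (hp1 : 1 < p)
    (C : ℝ) (hC1 : 1 < C) (hCp : C < p) :
    Filter.Tendsto
      (fun N : ℕ =>
        (({n : ℕ | 1 ≤ n ∧ n ≤ N ∧
            ∃ B : Finset ℕ, ∃ hB : B.Nonempty,
              (∀ b ∈ B, ∃ x y : ℕ, b = 2 ^ x * p ^ y) ∧
              (∑ b ∈ B, b) = n ∧
              (∀ b ∈ B, (b : ℝ) < C * (B.min' hB : ℝ))}.ncard : ℝ) / N))
      Filter.atTop (nhds 0) := by
  classical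
  have hp1' : (1:ℝ) < p := by exact_mod_cast hp1
  have hC0 : (0:ℝ) < C := by linarith
  set ℓ : ℝ := Real.logb p C with hℓ'
  have hℓ0 : 0 ≤ ℓ := Real.logb_nonneg hp1' hC1.le
  have hℓ1 : ℓ < 1 := by
    have h1 : Real.log C < Real.log p := Real.log_lt_log hC0 hCp
    have h2 : 0 < Real.log p := Real.log_pos hp1'
    rw [hℓ', Real.logb, div_lt_one h2]
    exact h1
  set δ : ℝ := (1 - ℓ)/4 with hδ'
  have hδ0 : 0 < δ := by rw [hδ']; linarith
  have hδ1 : δ < 1 := by rw [hδ']; linarith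
  obtain ⟨q, hq0, hbound⟩ := avail_bound hp hp1 hC1 hCp
  set c : ℕ := ⌈C⌉₊ with hc'
  have hc1 : 1 ≤ c := by
    rw [hc']
    exact Nat.one_le_iff_ne_zero.mpr (by positivity)
  have hCc : C ≤ (c:ℝ) := Nat.le_ceil C
  set B0 : ℝ := ((8*c : ℕ):ℝ)^(1-δ) with hB0'
  have hB0nn : 0 ≤ B0 := by rw [hB0']; positivity
  have hulim := upper_tendsto B0 δ hB0nn hδ0
  apply tendsto_of_tendsto_of_tendsto_of_le_of_le' tendsto_const_nhds hulim
  · filter_upwards with N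
    positivity
  · filter_upwards [eventually_ge_atTop (max 1 (2^(2*q)))] with N hN
    have hN1 : 1 ≤ N := le_trans (le_max_left _ _) hN
    have hNq : 2^(2*q) ≤ N := le_trans (le_max_right _ _) hN
    have hN0 : (0:ℝ) < N := by exact_mod_cast hN1
    set K : ℕ := Nat.log 2 (c*N) + 1 with hK'
    have hcN1 : 1 ≤ c*N := Nat.one_le_iff_ne_zero.mpr (by positivity)
    have hK2 : (C * N : ℝ) ≤ 2^K := by
      have h1 : c*N < 2^K := by rw [hK']; exact Nat.lt_pow_succ_log_self (by norm_num) _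
      have h2 : ((c*N : ℕ):ℝ) < ((2^K : ℕ):ℝ) := by exact_mod_cast h1
      push_cast at h2
      have h3 : C * N ≤ (c:ℝ) * N := mul_le_mul_of_nonneg_right hCc (Nat.cast_nonneg N)
      linarith
    have h2qK : 2*q ≤ K + 1 := by
      have h1 : Nat.log 2 (2^(2*q)) ≤ Nat.log 2 N := Nat.log_mono_right hNq
      rw [Nat.log_pow (by norm_num)] at h1
      have h2 : Nat.log 2 N ≤ Nat.log 2 (c*N) :=
        Nat.log_mono_right (Nat.le_mul_of_pos_left _ (by omega))
      omega
    have hpow8 : (2:ℕ)^(K+1) ≤ 8*(c*N) := by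
      have h1 : 2^(Nat.log 2 (c*N)) ≤ c*N := Nat.pow_log_le_self 2 (by omega)
      have h2 : (2:ℕ)^(K+1) = 4 * 2^(Nat.log 2 (c*N)) := by rw [hK']; ring
      omega
    set MN := (Finset.Icc 1 N).filter (fun m => ∃ x y : ℕ, m = 2^x * p^y) with hMN
    set FN := MN.biUnion (fun m => (ApAvail p C K m).powerset.image (ApPhi p C m)) with hFN
    have hsub : {n : ℕ | 1 ≤ n ∧ n ≤ N ∧
            ∃ B : Finset ℕ, ∃ hB : B.Nonempty,
              (∀ b ∈ B, ∃ x y : ℕ, b = 2 ^ x * p ^ y) ∧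
              (∑ b ∈ B, b) = n ∧
              (∀ b ∈ B, (b : ℝ) < C * (B.min' hB : ℝ))} ⊆ ↑FN := by
      intro n hn
      obtain ⟨hn1, hnN, hrep⟩ := hn
      obtain ⟨m, hmMN, hmem⟩ := cover hp hp1 hC1 hCp hK2 hn1 hnN hrep
      exact Finset.mem_coe.mpr (Finset.mem_biUnion.mpr ⟨m, hmMN, hmem⟩)
    have hncard : (({n : ℕ | 1 ≤ n ∧ n ≤ N ∧
            ∃ B : Finset ℕ, ∃ hB : B.Nonempty,
              (∀ b ∈ B, ∃ x y : ℕ, b = 2 ^ x * p ^ y) ∧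
              (∑ b ∈ B, b) = n ∧
              (∀ b ∈ B, (b : ℝ) < C * (B.min' hB : ℝ))}.ncard : ℕ) : ℝ) ≤ (FN.card : ℝ) := by
      have h1 := Set.ncard_le_ncard hsub FN.finite_toSet
      rw [Set.ncard_coe_finset] at h1
      exact_mod_cast h1
    -- per-m bound
    have hperm : ∀ m ∈ MN, (((ApAvail p C K m).powerset.image (ApPhi p C m)).card : ℝ)
        ≤ ((8*(c*N) : ℕ):ℝ)^(1-δ) := by
      intro m hm
      rw [hMN, Finset.mem_filter] at hm
      have hav : ((ApAvail p C K m).card : ℝ) ≤ (1-δ)*(K+1) := by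
        have h2 := hbound K m hm.2 h2qK
        have hgoal : (1 - δ) = (1 - (1 - Real.logb p C)/4) := by rw [hδ', hℓ']
        rw [hgoal]
        exact h2
      have hcard2 : (((ApAvail p C K m).powerset.image (ApPhi p C m)).card : ℕ)
          ≤ 2^((ApAvail p C K m).card) := by
        calc _ ≤ (ApAvail p C K m).powerset.card := Finset.card_image_le
          _ = 2^((ApAvail p C K m).card) := Finset.card_powerset _
      calc (((ApAvail p C K m).powerset.image (ApPhi p C m)).card : ℝ)
          ≤ ((2:ℝ))^((ApAvail p C K m).card) := by exact_mod_cast hcard2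
        _ = ((2:ℝ))^(((ApAvail p C K m).card : ℝ)) := by rw [Real.rpow_natCast]
        _ ≤ ((2:ℝ))^((1-δ)*(K+1)) := Real.rpow_le_rpow_of_exponent_le one_le_two hav
        _ = (((2:ℝ))^((K+1:ℕ)))^(1-δ) := by
            rw [← Real.rpow_natCast 2 (K+1), ← Real.rpow_mul (by norm_num : (0:ℝ) ≤ 2)]
            congr 1
            push_cast
            ring
        _ ≤ ((8*(c*N) : ℕ):ℝ)^(1-δ) := by
            apply Real.rpow_le_rpow (by positivity) _ (by linarith)
            have h3 : ((2:ℕ)^(K+1) : ℝ) ≤ ((8*(c*N) : ℕ):ℝ) := by exact_mod_cast hpow8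
            push_cast at h3 ⊢
            linarith
    have hFcard : (FN.card : ℝ) ≤ (MN.card : ℝ) * ((8*(c*N) : ℕ):ℝ)^(1-δ) := by
      have h1 : FN.card ≤ ∑ m ∈ MN, ((ApAvail p C K m).powerset.image (ApPhi p C m)).card :=
        Finset.card_biUnion_le
      have h1' : (FN.card : ℝ) ≤ ∑ m ∈ MN, ((((ApAvail p C K m).powerset.image (ApPhi p C m)).card : ℕ) : ℝ) := by
        exact_mod_cast h1
      have h2 := Finset.sum_le_sum hperm
      rw [Finset.sum_const, nsmul_eq_mul] at h2
      linarith
    -- cardinality of MN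
    have hMcard : (MN.card : ℝ) ≤ ((Nat.log 2 N + 1 : ℕ):ℝ)^2 := by
      set L := Nat.log 2 N with hL'
      have hmaps : ∀ m ∈ MN, (Apxc p m, Apyc p m) ∈
          (Finset.range (L+1)) ×ˢ (Finset.range (L+1)) := by
        intro m hm
        rw [hMN, Finset.mem_filter, Finset.mem_Icc] at hm
        obtain ⟨⟨hm1, hmN⟩, hform⟩ := hm
        have hrepm := Apxc_spec hform
        have hppos : 0 < p^(Apyc p m) := by positivity
        have hx2 : 2^(Apxc p m) ≤ N := by
          calc 2^(Apxc p m) ≤ 2^(Apxc p m) * p^(Apyc p m) := Nat.le_mul_of_pos_right _ hppos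
            _ = m := hrepm.symm
            _ ≤ N := hmN
        have hy2 : 2^(Apyc p m) ≤ N := by
          calc 2^(Apyc p m) ≤ p^(Apyc p m) := Nat.pow_le_pow_left (by omega : 2 ≤ p) _
            _ ≤ 2^(Apxc p m) * p^(Apyc p m) := Nat.le_mul_of_pos_left _ (by positivity)
            _ = m := hrepm.symm
            _ ≤ N := hmN
        rw [Finset.mem_product, Finset.mem_range, Finset.mem_range]
        constructor
        · have := (Nat.le_log_iff_pow_le (by norm_num) (by omega)).mpr hx2
          omega
        · have := (Nat.le_log_iff_pow_le (by norm_num) (by omega)).mpr hy2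
          omega
      have hinj3 : Set.InjOn (fun m => (Apxc p m, Apyc p m)) ↑MN := by
        intro m hm m' hm' heq
        rw [Finset.mem_coe, hMN, Finset.mem_filter] at hm hm'
        have h1 := Apxc_spec hm.2
        have h2 := Apxc_spec hm'.2
        simp only [Prod.mk.injEq] at heq
        rw [h1, h2, heq.1, heq.2]
      have h4 := Finset.card_le_card_of_injOn (fun m => (Apxc p m, Apyc p m)) hmaps hinj3
      rw [Finset.card_product, Finset.card_range] at h4
      have h5 : MN.card ≤ (L+1)^2 := by rw [sq]; exact h4
      calc (MN.card : ℝ) ≤ (((L+1)^2 : ℕ):ℝ) := by exact_mod_cast h5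
        _ = ((Nat.log 2 N + 1 : ℕ):ℝ)^2 := by rw [hL']; push_cast; ring
    -- combine
    have hsplit8 : ((8*(c*N) : ℕ):ℝ)^(1-δ) = B0 * (N:ℝ)^(1-δ) := by
      rw [hB0']
      rw [← Real.mul_rpow (by positivity) (by positivity)]
      congr 1
      push_cast
      ring
    have hNpow : (N:ℝ)^(1-δ) = (N:ℝ)^(-δ) * N := by
      rw [show (1-δ) = -δ + 1 by ring, Real.rpow_add hN0, Real.rpow_one]
    have hfinal : (({n : ℕ | 1 ≤ n ∧ n ≤ N ∧
            ∃ B : Finset ℕ, ∃ hB : B.Nonempty,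
              (∀ b ∈ B, ∃ x y : ℕ, b = 2 ^ x * p ^ y) ∧
              (∑ b ∈ B, b) = n ∧
              (∀ b ∈ B, (b : ℝ) < C * (B.min' hB : ℝ))}.ncard : ℕ) : ℝ)
        ≤ ((Nat.log 2 N + 1 : ℕ):ℝ)^2 * B0 * (N:ℝ)^(-δ) * N := by
      calc _ ≤ (FN.card : ℝ) := hncard
        _ ≤ (MN.card : ℝ) * ((8*(c*N) : ℕ):ℝ)^(1-δ) := hFcard
        _ ≤ ((Nat.log 2 N + 1 : ℕ):ℝ)^2 * ((8*(c*N) : ℕ):ℝ)^(1-δ) := by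
            apply mul_le_mul_of_nonneg_right hMcard (by positivity)
        _ = ((Nat.log 2 N + 1 : ℕ):ℝ)^2 * B0 * (N:ℝ)^(-δ) * N := by
            rw [hsplit8, hNpow]; ring
    rw [div_le_iff₀ hN0]
    exact hfinal
end

section
/- For every odd integer p > 1, there exists a finite set S of integers of the form 2^x·p^y, each greater than 1, and a positive integer M₀ ≤ p, such that every integer x with M₀ ≤ x ≤ M₀ + |S| is a sum of distinct elements of S, |S| ≤ 1 + ⌈log₂ p⌉, and p ≤ max S ≤ 2^⌈log₂ p⌉. -/
lemma aux_binary (k : ℕ) : ∀ m < 2^k, ∃ T ⊆ Finset.range k, ∑ i ∈ T, 2^i = m := by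
  induction k with
  | zero =>
    intro m hm
    interval_cases m
    exact ⟨∅, by simp, by simp⟩
  | succ k ih =>
    intro m hm
    by_cases h : m < 2^k
    · obtain ⟨T, hT, hs⟩ := ih m h
      exact ⟨T, hT.trans (Finset.range_subset_range.2 (Nat.le_succ k)), hs⟩
    · have hpow : 2^(k+1) = 2^k + 2^k := by ring
      obtain ⟨T, hT, hs⟩ := ih (m - 2^k) (by omega)
      have hkT : k ∉ T := fun hk => by simpa using Finset.mem_range.1 (hT hk)
      refine ⟨insert k T, ?_, ?_⟩
      · exact Finset.insert_subset (Finset.mem_range.2 (Nat.lt_succ_self k))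
          (hT.trans (Finset.range_subset_range.2 (Nat.le_succ k)))
      · rw [Finset.sum_insert hkT, hs]; omega

lemma aux_even (k m : ℕ) (hm : m < 2^k) :
    ∃ T ⊆ (Finset.range k).image (fun i => 2^(i+1)), ∑ t ∈ T, t = 2 * m := by
  obtain ⟨T, hT, hs⟩ := aux_binary k m hm
  have hinj : Set.InjOn (fun i => 2^(i+1)) T := by
    intro a _ b _ h
    have := Nat.pow_right_injective (le_refl 2) h
    omega
  refine ⟨T.image (fun i => 2^(i+1)), Finset.image_subset_image hT, ?_⟩
  rw [Finset.sum_image hinj]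
  calc ∑ i ∈ T, 2^(i+1) = ∑ i ∈ T, 2 * 2^i := by
        apply Finset.sum_congr rfl; intro i _; ring
    _ = 2 * m := by rw [← Finset.mul_sum, hs]

theorem exists_good_set (p : ℕ) (hp : Odd p) (hp1 : 1 < p) :
    ∃ S : Finset ℕ, ∃ hS : S.Nonempty, ∃ M₀ : ℕ,
      (∀ s ∈ S, (∃ x y : ℕ, s = 2 ^ x * p ^ y) ∧ 1 < s) ∧
      0 < M₀ ∧ M₀ ≤ p ∧
      (∀ x : ℕ, M₀ ≤ x → x ≤ M₀ + S.card → ∃ T ⊆ S, (∑ t ∈ T, t) = x) ∧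
      S.card ≤ 1 + Nat.clog 2 p ∧
      p ≤ S.max' hS ∧ S.max' hS ≤ 2 ^ (Nat.clog 2 p) := by
  set k := Nat.clog 2 p with hk
  have hp3 : 3 ≤ p := by
    rcases hp with ⟨t, ht⟩; omega
  have hpk : p ≤ 2^k := Nat.le_pow_clog (by norm_num) p
  have hk2 : 2 ≤ k := by
    have := (Nat.lt_clog_iff_pow_lt (by norm_num : 1 < 2) (x := p) (y := 1)).2 (by omega)
    omega
  have hklt : k < 2^k := Nat.lt_two_pow_self
  set P : Finset ℕ := (Finset.range k).image (fun i => 2^(i+1)) with hP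
  have hpP : p ∉ P := by
    intro h
    obtain ⟨i, _, hi⟩ := Finset.mem_image.1 h
    have : 2 ∣ p := by rw [← hi]; exact dvd_pow_self 2 (Nat.succ_ne_zero i)
    rcases hp with ⟨t, ht⟩; omega
  refine ⟨insert p P, ⟨p, Finset.mem_insert_self p P⟩, p - 1, ?_, by omega, by omega, ?_, ?_, ?_, ?_⟩
  · intro s hs
    rcases Finset.mem_insert.1 hs with h | h
    · exact ⟨⟨0, 1, by simp [h]⟩, by omega⟩
    · obtain ⟨i, _, hi⟩ := Finset.mem_image.1 h
      refine ⟨⟨i+1, 0, by simp [← hi]⟩, ?_⟩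
      have : 2^1 ≤ 2^(i+1) := Nat.pow_le_pow_right (by norm_num) (by omega)
      omega
  · -- representation
    have hcard : (insert p P).card = k + 1 := by
      rw [Finset.card_insert_of_notMem hpP, hP, Finset.card_image_of_injective _
        (fun a b h => by have := Nat.pow_right_injective (le_refl 2) h; omega),
        Finset.card_range]
    intro x hx1 hx2
    rw [hcard] at hx2
    rcases Nat.even_or_odd x with hev | hod
    · -- x even, x = 2m, m < 2^k
      obtain ⟨m, hm⟩ := hev
      have hmlt : m < 2^k := by omega
      obtain ⟨T, hT, hs⟩ := aux_even k m hmlt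
      exact ⟨T, hT.trans (Finset.subset_insert p P), by omega⟩
    · -- x odd, x ≥ p
      have hxp : p ≤ x := by
        rcases hod with ⟨t, ht⟩; rcases hp with ⟨u, hu⟩; omega
      have hdiff : Even (x - p) := by
        rcases hod with ⟨t, ht⟩; rcases hp with ⟨u, hu⟩
        exact ⟨t - u, by omega⟩
      obtain ⟨m, hm⟩ := hdiff
      have hmlt : m < 2^k := by omega
      obtain ⟨T, hT, hs⟩ := aux_even k m hmlt
      have hpT : p ∉ T := fun h => hpP (hT h)
      refine ⟨insert p T, Finset.insert_subset_insert p hT, ?_⟩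
      rw [Finset.sum_insert hpT, hs]; omega
  · have hcard : (insert p P).card = k + 1 := by
      rw [Finset.card_insert_of_notMem hpP, hP, Finset.card_image_of_injective _
        (fun a b h => by have := Nat.pow_right_injective (le_refl 2) h; omega),
        Finset.card_range]
    omega
  · exact Finset.le_max' _ p (Finset.mem_insert_self p P)
  · apply Finset.max'_le
    intro y hy
    rcases Finset.mem_insert.1 hy with h | h
    · omega
    · obtain ⟨i, hi, hieq⟩ := Finset.mem_image.1 h
      rw [← hieq]
      exact Nat.pow_le_pow_right (by norm_num) (Finset.mem_range.1 hi)
end
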